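/- arXiv:0804.3357 — 6 statements merged into one kernel-verified Lean document; each statement's English description precedes it below -/
import Mathlib

section
/- The normaliser of the dihedral subgroup D_{2n}^h (of order 2n, containing the reflection h) in O(2) is the dihedral subgroup D_{4n}^h of order 4n, and hence the Weyl group W_{O(2)}(D_{2n}^h) = N_{O(2)}(D_{2n}^h)/D_{2n}^h has order 2. -/
/-- The group `O(2)` of `2 × 2` real orthogonal matrices. -/
abbrev O2 := Matrix.orthogonalGroup (Fin 2) ℝ

/-- The rotation subgroup `SO(2) ≤ O(2)`, consisting of orthogonal matrices of
determinant one. -/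
def SO2 : Subgroup O2 where
  carrier := {A | (A : Matrix (Fin 2) (Fin 2) ℝ).det = 1}
  mul_mem' := by
    intro a b ha hb
    simp only [Set.mem_setOf_eq, Matrix.UnitaryGroup.mul_val, Matrix.det_mul] at *
    rw [ha, hb, mul_one]
  one_mem' := by simp [Set.mem_setOf_eq]
  inv_mem' := by
    intro a ha
    simp only [Set.mem_setOf_eq, Matrix.UnitaryGroup.inv_val] at *
    simpa [Matrix.star_eq_conjTranspose, Matrix.det_conjTranspose] using ha


open Matrix

abbrev M2 := Matrix (Fin 2) (Fin 2) ℝ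

lemma mem_SO2_iff {A : O2} : A ∈ SO2 ↔ (A : M2).det = 1 := Iff.rfl

lemma o2_mul_transpose (A : O2) : (A : M2) * (A : M2)ᵀ = 1 := by
  have := A.2.2
  rwa [Matrix.star_eq_conjTranspose, Matrix.conjTranspose_eq_transpose_of_trivial] at this

lemma o2_transpose_mul (A : O2) : (A : M2)ᵀ * (A : M2) = 1 := by
  have := A.2.1
  rwa [Matrix.star_eq_conjTranspose, Matrix.conjTranspose_eq_transpose_of_trivial] at this

lemma o2_adj (A : O2) : (A : M2).adjugate = (A : M2).det • (A : M2)ᵀ := by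
  calc (A : M2).adjugate = ((A : M2)ᵀ * (A : M2)) * (A : M2).adjugate := by
        rw [o2_transpose_mul, one_mul]
    _ = (A : M2)ᵀ * ((A : M2).det • 1) := by rw [Matrix.mul_assoc, Matrix.mul_adjugate]
    _ = (A : M2).det • (A : M2)ᵀ := by rw [Matrix.mul_smul, Matrix.mul_one]

lemma o2_det (A : O2) : (A : M2).det = 1 ∨ (A : M2).det = -1 := by
  have h := o2_mul_transpose A
  have : (A : M2).det * (A : M2).det = 1 := by
    have := congrArg Matrix.det h
    rwa [Matrix.det_mul, Matrix.det_transpose, Matrix.det_one] at this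
  exact mul_self_eq_one_iff.1 this

lemma det_not_SO2 {A : O2} (hA : A ∉ SO2) : (A : M2).det = -1 :=
  (o2_det A).resolve_left (fun h => hA (mem_SO2_iff.2 h))

lemma so2_param {A : O2} (hA : A ∈ SO2) :
    ∃ a b : ℝ, a ^ 2 + b ^ 2 = 1 ∧ (A : M2) = !![a, -b; b, a] := by
  have hdet : (A : M2).det = 1 := hA
  have hadj : (A : M2).adjugate = (A : M2)ᵀ := by rw [o2_adj, hdet, one_smul]
  rw [Matrix.adjugate_fin_two] at hadj
  have e1 : (A : M2) 1 1 = (A : M2) 0 0 := by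
    have := congrFun (congrFun hadj 0) 0; simpa using this
  have e2 : (A : M2) 0 1 = -((A : M2) 1 0) := by
    have := congrFun (congrFun hadj 0) 1; simpa using neg_eq_iff_eq_neg.1 this
  refine ⟨(A : M2) 0 0, (A : M2) 1 0, ?_, ?_⟩
  · rw [Matrix.det_fin_two, e1, e2] at hdet; nlinarith [hdet]
  · rw [Matrix.eta_fin_two (A : M2), e1, e2]; simp

lemma refl_param {A : O2} (hA : A ∉ SO2) :
    ∃ a b : ℝ, a ^ 2 + b ^ 2 = 1 ∧ (A : M2) = !![a, b; b, -a] := by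
  have hdet : (A : M2).det = -1 := det_not_SO2 hA
  have hadj : (A : M2).adjugate = -(A : M2)ᵀ := by rw [o2_adj, hdet, neg_smul, one_smul]
  rw [Matrix.adjugate_fin_two] at hadj
  have e1 : (A : M2) 1 1 = -((A : M2) 0 0) := by
    have := congrFun (congrFun hadj 0) 0; simpa using this
  have e2 : (A : M2) 0 1 = (A : M2) 1 0 := by
    have := congrFun (congrFun hadj 0) 1; simpa using neg_eq_iff_eq_neg.1 this
  refine ⟨(A : M2) 0 0, (A : M2) 1 0, ?_, ?_⟩
  · rw [Matrix.det_fin_two, e1, e2] at hdet; nlinarith [hdet]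
  · rw [Matrix.eta_fin_two (A : M2), e1, e2]; simp

lemma o2_ext {A B : O2} (hAB : (A : M2) = (B : M2)) : A = B := Subtype.ext hAB

lemma mat_ext {A B : M2} (h00 : A 0 0 = B 0 0) (h01 : A 0 1 = B 0 1)
    (h10 : A 1 0 = B 1 0) (h11 : A 1 1 = B 1 1) : A = B := by
  ext i j; fin_cases i <;> fin_cases j <;> assumption

lemma so2_comm {A B : O2} (hA : A ∈ SO2) (hB : B ∈ SO2) : A * B = B * A := by
  obtain ⟨a, b, -, hab⟩ := so2_param hA
  obtain ⟨c, d, -, hcd⟩ := so2_param hB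
  apply o2_ext
  show ((A * B : O2) : M2) = ((B * A : O2) : M2)
  rw [Matrix.UnitaryGroup.mul_val, Matrix.UnitaryGroup.mul_val, hab, hcd]
  apply mat_ext <;> simp [Matrix.mul_apply, Fin.sum_univ_two] <;> ring

lemma refl_sq {h : O2} (hh : h ∉ SO2) : h * h = 1 := by
  obtain ⟨a, b, hab1, hab⟩ := refl_param hh
  apply o2_ext
  show ((h * h : O2) : M2) = ((1 : O2) : M2)
  rw [Matrix.UnitaryGroup.mul_val, Matrix.UnitaryGroup.one_val, hab]
  apply mat_ext <;> simp [Matrix.mul_apply, Fin.sum_univ_two, Matrix.one_apply] <;> nlinarith [hab1]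

lemma refl_inv {h : O2} (hh : h ∉ SO2) : h⁻¹ = h :=
  inv_eq_of_mul_eq_one_right (refl_sq hh)

lemma refl_mul_so2 {h a : O2} (hh : h ∉ SO2) (ha : a ∈ SO2) : h * a = a⁻¹ * h := by
  obtain ⟨p, q, -, hpq⟩ := refl_param hh
  obtain ⟨c, d, -, hcd⟩ := so2_param ha
  apply o2_ext
  show ((h * a : O2) : M2) = ((a⁻¹ * h : O2) : M2)
  rw [Matrix.UnitaryGroup.mul_val, Matrix.UnitaryGroup.mul_val, Matrix.UnitaryGroup.inv_val,
    Matrix.star_eq_conjTranspose, Matrix.conjTranspose_eq_transpose_of_trivial, hpq, hcd,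
    show (!![c, -d; d, c] : M2)ᵀ = !![c, d; -d, c] from by apply mat_ext <;> simp]
  apply mat_ext <;> simp [Matrix.mul_apply, Fin.sum_univ_two] <;> ring

lemma so2_sq_eq_one {a : O2} (ha : a ∈ SO2) (h2 : a * a = 1) : a = 1 ∨ (a : M2) = -1 := by
  obtain ⟨c, d, hcd1, hcd⟩ := so2_param ha
  have hm : ((a * a : O2) : M2) = ((1 : O2) : M2) := by rw [h2]
  rw [Matrix.UnitaryGroup.mul_val, Matrix.UnitaryGroup.one_val, hcd] at hm
  have e00 : c * c + -d * d = 1 := by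
    have := congrFun (congrFun hm 0) 0
    simpa [Matrix.mul_apply, Fin.sum_univ_two, Matrix.one_apply] using this
  have e10 : d * c + c * d = 0 := by
    have := congrFun (congrFun hm 1) 0
    simpa [Matrix.mul_apply, Fin.sum_univ_two, Matrix.one_apply] using this
  have hd : d = 0 := by nlinarith [hcd1, e00, e10]
  have hc : c = 1 ∨ c = -1 := by
    rcases mul_self_eq_one_iff.1 (by nlinarith [hcd1, hd] : c * c = 1) with h | h
    · exact Or.inl h
    · exact Or.inr h
  rcases hc with h | h
  · left
    apply o2_ext
    rw [hcd, Matrix.UnitaryGroup.one_val, hd, h]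
    apply mat_ext <;> simp [Matrix.one_apply]
  · right
    rw [hcd, hd, h]
    apply mat_ext <;> simp [Matrix.one_apply]

lemma refl_conj_zpow {h a : O2} (hh : h ∉ SO2) (ha : a ∈ SO2) (k : ℤ) :
    h * a ^ k = a ^ (-k) * h := by
  have h1 : h * a * h⁻¹ = a⁻¹ := by rw [refl_mul_so2 hh ha]; group
  have h2 : h * a ^ k * h⁻¹ = a ^ (-k) := by
    rw [← _root_.conj_zpow, h1, _root_.inv_zpow, ← _root_.zpow_neg]
  calc h * a ^ k = (h * a ^ k * h⁻¹) * h := by group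
    _ = a ^ (-k) * h := by rw [h2]

lemma mem_cl_left {a h : O2} : a ∈ Subgroup.closure {a, h} :=
  Subgroup.subset_closure (Set.mem_insert _ _)

lemma mem_cl_right {a h : O2} : h ∈ Subgroup.closure {a, h} :=
  Subgroup.subset_closure (Set.mem_insert_of_mem _ rfl)

lemma nf {a h : O2} (ha : a ∈ SO2) (hh : h ∉ SO2) {x : O2}
    (hx : x ∈ Subgroup.closure {a, h}) : ∃ k : ℤ, x = a ^ k ∨ x = a ^ k * h := by
  induction hx using Subgroup.closure_induction with
  | mem x hx =>
    rcases hx with rfl | rfl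
    · exact ⟨1, Or.inl (by rw [zpow_one])⟩
    · exact ⟨0, Or.inr (by rw [zpow_zero, one_mul])⟩
  | one => exact ⟨0, Or.inl (zpow_zero a).symm⟩
  | mul x y hx hy ihx ihy =>
    obtain ⟨k, hk | hk⟩ := ihx <;> obtain ⟨l, hl | hl⟩ := ihy
    · exact ⟨k + l, Or.inl (by rw [hk, hl, _root_.zpow_add])⟩
    · exact ⟨k + l, Or.inr (by rw [hk, hl, ← mul_assoc, ← _root_.zpow_add])⟩
    · refine ⟨k + -l, Or.inr ?_⟩
      rw [hk, hl, mul_assoc, refl_conj_zpow hh ha, ← mul_assoc, ← _root_.zpow_add]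
    · refine ⟨k + -l, Or.inl ?_⟩
      rw [hk, hl, mul_assoc, ← mul_assoc h, refl_conj_zpow hh ha, mul_assoc,
        refl_sq hh, mul_one, ← _root_.zpow_add]
  | inv x hx ih =>
    obtain ⟨k, hk | hk⟩ := ih
    · exact ⟨-k, Or.inl (by rw [hk, _root_.zpow_neg])⟩
    · refine ⟨k, Or.inr ?_⟩
      rw [hk, _root_.mul_inv_rev, refl_inv hh, ← _root_.zpow_neg, refl_conj_zpow hh ha, neg_neg]

lemma nf_mem₁ {a h : O2} (k : ℤ) : a ^ k ∈ Subgroup.closure {a, h} :=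
  zpow_mem mem_cl_left k

lemma nf_mem₂ {a h : O2} (k : ℤ) : a ^ k * h ∈ Subgroup.closure {a, h} :=
  mul_mem (nf_mem₁ k) mem_cl_right

lemma norm_helper {G : Type*} [Group G] (D : Subgroup G) (g : G)
    (h1 : ∀ y ∈ D, g * y * g⁻¹ ∈ D) (h2 : ∀ y ∈ D, g⁻¹ * y * g ∈ D) :
    g ∈ Subgroup.normalizer (D : Set G) := by
  rw [Subgroup.mem_normalizer_iff]
  intro x
  constructor
  · exact h1 x
  · intro hx
    have := h2 _ hx
    have e : g⁻¹ * (g * x * g⁻¹) * g = x := by group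
    rwa [e] at this

/-- if `r` is a rotation of order `n`, `h` a reflection (an element of
`O(2) \ SO(2)`), so that `D := ⟨r, h⟩` is the dihedral subgroup `D_{2n}^h` of order `2n`,
and `s` is a rotation of order `2n` with `s ^ 2 = r` (so that `⟨s, h⟩` is the dihedral
subgroup `D_{4n}^h` of order `4n`), then the normaliser of `D_{2n}^h` in `O(2)` is
`D_{4n}^h`, and the Weyl group `N_{O(2)}(D_{2n}^h) / D_{2n}^h` has order `2`. -/
theorem statement0 (n : ℕ) (hn : 1 ≤ n) (h r s : O2)
    (hh : h ∉ SO2) (hr : r ∈ SO2) (hs : s ∈ SO2)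
    (hor : orderOf r = n) (hos : orderOf s = 2 * n) (hsr : s ^ 2 = r) :
    (Subgroup.normalizer (Subgroup.closure {r, h} : Set O2)) = Subgroup.closure {s, h} ∧
      Nat.card
        (↥(Subgroup.normalizer (Subgroup.closure {r, h} : Set O2)) ⧸
          (Subgroup.closure {r, h}).subgroupOf (Subgroup.normalizer (Subgroup.closure {r, h} : Set O2))) = 2 := by
  have h2 : h * h = 1 := refl_sq hh
  set D := Subgroup.closure {r, h} with hD
  set Nc := Subgroup.closure {s, h} with hNc
  have hrs : ∀ k : ℤ, r ^ k = s ^ (2 * k) := by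
    intro k
    have e2 : s ^ (2 : ℤ) = r := by
      rw [show (2 : ℤ) = ((2 : ℕ) : ℤ) by norm_cast, _root_.zpow_natCast, hsr]
    rw [_root_.zpow_mul, e2]
  have hsn1 : s ^ (2 * n) = 1 := by rw [← hos]; exact pow_orderOf_eq_one s
  have hsodd : ∀ j : ℤ, s ^ j = 1 → (2 : ℤ) ∣ j := by
    intro j hj
    have h1 : ((2 * n : ℕ) : ℤ) ∣ j := by rw [← hos]; exact orderOf_dvd_iff_zpow_eq_one.2 hj
    exact dvd_trans ⟨(n : ℤ), by push_cast; ring⟩ h1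
  have hDmem : ∀ x ∈ D, ∃ m : ℤ, x = s ^ (2 * m) ∨ x = s ^ (2 * m) * h := by
    intro x hx
    obtain ⟨k, hk⟩ := nf hr hh hx
    rw [hrs k] at hk
    exact ⟨k, hk⟩
  have hsD : ∀ m : ℤ, s ^ (2 * m) ∈ D ∧ s ^ (2 * m) * h ∈ D := by
    intro m; rw [← hrs]; exact ⟨nf_mem₁ m, nf_mem₂ m⟩
  have hhD : h ∈ D := mem_cl_right
  have hrD : r ∈ D := mem_cl_left
  have hpar : ∀ k : ℤ, s ^ k ∈ D ↔ (2 : ℤ) ∣ k := by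
    intro k
    constructor
    · intro hk
      obtain ⟨m, hm | hm⟩ := hDmem _ hk
      · have e : s ^ (k - 2 * m) = 1 := by rw [_root_.zpow_sub, hm]; simp
        have := hsodd _ e
        omega
      · exfalso
        apply hh
        have e : h = s ^ (-(2 * m)) * s ^ k := by rw [hm, _root_.zpow_neg]; group
        rw [e]
        exact mul_mem (zpow_mem hs _) (zpow_mem hs _)
    · rintro ⟨m, rfl⟩; exact (hsD m).1
  have hparh : ∀ k : ℤ, s ^ k * h ∈ D ↔ (2 : ℤ) ∣ k := by
    intro k
    rw [mul_mem_cancel_right hhD]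
    exact hpar k
  have hsh : s * h * s⁻¹ = r * h := by
    have e := refl_mul_so2 hh (inv_mem hs)
    calc s * h * s⁻¹ = s * (h * s⁻¹) := by group
      _ = s * (s * h) := by rw [e, inv_inv]
      _ = r * h := by rw [← mul_assoc, ← _root_.pow_two, hsr]
  have hsh' : s⁻¹ * h * s = r⁻¹ * h := by
    have e := refl_mul_so2 hh hs
    calc s⁻¹ * h * s = s⁻¹ * (h * s) := by group
      _ = s⁻¹ * (s⁻¹ * h) := by rw [e]
      _ = r⁻¹ * h := by
          rw [← mul_assoc, ← _root_.mul_inv_rev, ← _root_.pow_two, hsr]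
  have hsN : s ∈ (Subgroup.normalizer (D : Set O2)) := by
    apply norm_helper
    · intro y hy
      obtain ⟨m, hm | hm⟩ := hDmem y hy
      · have e : s * s ^ (2 * m) * s⁻¹ = s ^ (2 * m) := by group
        rw [hm, e]; exact (hsD m).1
      · have e : s * (s ^ (2 * m) * h) * s⁻¹ = s ^ (2 * m) * (s * h * s⁻¹) := by group
        rw [hm, e, hsh]
        exact mul_mem (hsD m).1 (mul_mem hrD hhD)
    · intro y hy
      obtain ⟨m, hm | hm⟩ := hDmem y hy
      · have e : s⁻¹ * s ^ (2 * m) * s = s ^ (2 * m) := by group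
        rw [hm, e]; exact (hsD m).1
      · have e : s⁻¹ * (s ^ (2 * m) * h) * s = s ^ (2 * m) * (s⁻¹ * h * s) := by group
        rw [hm, e, hsh']
        exact mul_mem (hsD m).1 (mul_mem (inv_mem hrD) hhD)
  have hhN : h ∈ (Subgroup.normalizer (D : Set O2)) := by
    have hconj : ∀ y ∈ D, h * y * h⁻¹ ∈ D := by
      intro y hy
      obtain ⟨k, hk | hk⟩ := nf hr hh hy
      · rw [hk, refl_conj_zpow hh hr k, mul_assoc, _root_.mul_inv_cancel, mul_one]
        exact nf_mem₁ (-k)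
      · have e : h * (r ^ k * h) * h⁻¹ = (h * r ^ k) * (h * h⁻¹) := by group
        rw [hk, e, _root_.mul_inv_cancel, mul_one, refl_conj_zpow hh hr k]
        exact nf_mem₂ (-k)
    apply norm_helper _ _ hconj
    intro y hy
    have e : h⁻¹ = h := refl_inv hh
    rw [e]
    have := hconj y hy
    rwa [e] at this
  have hle1 : Nc ≤ (Subgroup.normalizer (D : Set O2)) := by
    rw [hNc]
    refine (Subgroup.closure_le _).2 ?_
    rintro x (rfl | rfl) <;> assumption
  have hsnm : (↑(s ^ n) : M2) = -1 := by
    have e1 : s ^ n * s ^ n = 1 := by rw [← _root_.pow_add, show n + n = 2 * n by ring, hsn1]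
    have e2 : s ^ n ≠ 1 := by
      intro e
      have hd := orderOf_dvd_of_pow_eq_one e
      rw [hos] at hd
      have := Nat.le_of_dvd (by omega) hd
      omega
    rcases so2_sq_eq_one (pow_mem hs n) e1 with e | e
    · exact absurd e e2
    · exact e
  have key : ∀ g : O2, g ∈ (Subgroup.normalizer (D : Set O2)) → g ∈ SO2 → g ∈ Nc := by
    intro g hg hgSO
    have hgh : g * h * g⁻¹ ∈ D := (Subgroup.mem_normalizer_iff.1 hg h).1 hhD
    have e : g * h * g⁻¹ = g * g * h := by
      rw [mul_assoc, refl_mul_so2 hh (inv_mem hgSO), inv_inv, ← mul_assoc]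
    rw [e] at hgh
    obtain ⟨m, hm | hm⟩ := hDmem _ hgh
    · exfalso
      apply hh
      have e2 : h = (g * g)⁻¹ * s ^ (2 * m) := by rw [← hm]; group
      rw [e2]
      exact mul_mem (inv_mem (mul_mem hgSO hgSO)) (zpow_mem hs _)
    · have hg2 : g * g = s ^ (2 * m) := mul_right_cancel hm
      have hc : s ^ (-m) * g = g * s ^ (-m) := so2_comm (zpow_mem hs (-m)) hgSO
      have ht2 : (g * s ^ (-m)) * (g * s ^ (-m)) = 1 := by
        calc (g * s ^ (-m)) * (g * s ^ (-m)) = g * (s ^ (-m) * g) * s ^ (-m) := by group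
          _ = g * (g * s ^ (-m)) * s ^ (-m) := by rw [hc]
          _ = (g * g) * (s ^ (-m) * s ^ (-m)) := by group
          _ = s ^ (2 * m + (-m + -m)) := by
              rw [hg2, ← _root_.zpow_add, ← _root_.zpow_add]
          _ = 1 := by rw [show 2 * m + (-m + -m) = 0 by ring, _root_.zpow_zero]
      rcases so2_sq_eq_one (mul_mem hgSO (zpow_mem hs (-m))) ht2 with e1 | e1
      · have e3 : g = s ^ m := by
          have e4 := eq_inv_of_mul_eq_one_left e1
          rw [_root_.zpow_neg, inv_inv] at e4
          rw [← e4]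
        rw [e3]; exact nf_mem₁ m
      · have e3 : g * s ^ (-m) = s ^ n := o2_ext (by rw [e1, hsnm])
        have e4 : g = s ^ n * s ^ m := by
          rw [← e3]; group
        rw [e4]
        exact mul_mem (pow_mem mem_cl_left n) (nf_mem₁ m)
  have hle2 : (Subgroup.normalizer (D : Set O2)) ≤ Nc := by
    intro g hg
    by_cases hgSO : g ∈ SO2
    · exact key g hg hgSO
    · have hghSO : g * h ∈ SO2 := by
        rw [mem_SO2_iff, Matrix.UnitaryGroup.mul_val, Matrix.det_mul,
          det_not_SO2 hgSO, det_not_SO2 hh]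
        norm_num
      have hghN : g * h ∈ (Subgroup.normalizer (D : Set O2)) := mul_mem hg (Subgroup.le_normalizer hhD)
      have hmem := key _ hghN hghSO
      have hgeq : g = (g * h) * h := by rw [mul_assoc, h2, mul_one]
      rw [hgeq]
      exact mul_mem hmem mem_cl_right
  have heq : (Subgroup.normalizer (D : Set O2)) = Nc := le_antisymm hle2 hle1
  refine ⟨heq, ?_⟩
  rw [heq, ← Subgroup.index_eq_card, Subgroup.index_eq_two_iff]
  have hsNc : s ∈ Nc := mem_cl_left
  refine ⟨⟨s, hsNc⟩, ?_⟩
  intro b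
  obtain ⟨k, hk | hk⟩ := nf hs hh b.2
  · have hb : b ∈ D.subgroupOf Nc ↔ (2 : ℤ) ∣ k := by
      rw [Subgroup.mem_subgroupOf, hk]; exact hpar k
    have hba : b * ⟨s, hsNc⟩ ∈ D.subgroupOf Nc ↔ (2 : ℤ) ∣ (k + 1) := by
      rw [Subgroup.mem_subgroupOf]
      have e : ((b * ⟨s, hsNc⟩ : Nc) : O2) = s ^ (k + 1) := by
        show (b : O2) * s = s ^ (k + 1)
        rw [hk, _root_.zpow_add_one]
      rw [e]; exact hpar (k + 1)
    rw [Xor, hb, hba]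
    omega
  · have hb : b ∈ D.subgroupOf Nc ↔ (2 : ℤ) ∣ k := by
      rw [Subgroup.mem_subgroupOf, hk]; exact hparh k
    have hba : b * ⟨s, hsNc⟩ ∈ D.subgroupOf Nc ↔ (2 : ℤ) ∣ (k - 1) := by
      rw [Subgroup.mem_subgroupOf]
      have e : ((b * ⟨s, hsNc⟩ : Nc) : O2) = s ^ (k - 1) * h := by
        show (b : O2) * s = s ^ (k - 1) * h
        rw [hk, mul_assoc, refl_mul_so2 hh hs, ← mul_assoc, ← _root_.zpow_sub_one]
      rw [e]; exact hparh (k - 1)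
    rw [Xor, hb, hba]
    omega
end

section
/- The functor ⊞_1 : A → ℚ[ℤ/2]-Mod, sending V to the pullback of V_∞ → colim_n ∏_{k≥n} V_k ← ∏_{k≥1} V_k, preserves filtered colimits. -/
open scoped TensorProduct

universe u

variable {V W U : ℕ → Type u}
  [∀ k, AddCommGroup (V k)] [∀ k, Module ℚ (V k)]
  [∀ k, AddCommGroup (W k)] [∀ k, Module ℚ (W k)]
  [∀ k, AddCommGroup (U k)] [∀ k, Module ℚ (U k)]

/-- The submodule of eventually-zero sequences in `∏ k, V k`. -/
def evZero (V : ℕ → Type u) [∀ k, AddCommGroup (V k)] [∀ k, Module ℚ (V k)] :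
    Submodule ℚ (∀ k, V k) where
  carrier := {x | ∃ N, ∀ k, N ≤ k → x k = 0}
  add_mem' := by
    rintro x y ⟨N, hN⟩ ⟨M, hM⟩
    exact ⟨max N M, fun k hk => by
      simp [hN k (le_trans (le_max_left _ _) hk), hM k (le_trans (le_max_right _ _) hk)]⟩
  zero_mem' := ⟨0, fun k _ => rfl⟩
  smul_mem' := by
    rintro c x ⟨N, hN⟩
    exact ⟨N, fun k hk => by simp [hN k hk]⟩

/-- `colim_n ∏_{k ≥ n} V_k`, realised concretely as the quotient of `∏ k, V k` by the
submodule of eventually-zero sequences. -/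
def VEnd (V : ℕ → Type u) [∀ k, AddCommGroup (V k)] [∀ k, Module ℚ (V k)] : Type u :=
  (∀ k, V k) ⧸ evZero V

instance : AddCommGroup (VEnd V) := by unfold VEnd; infer_instance
instance : Module ℚ (VEnd V) := by unfold VEnd; infer_instance

/-- The class of a sequence in `VEnd V`. -/
def VEnd.mk : (∀ k, V k) →ₗ[ℚ] VEnd V := (evZero V).mkQ

/-- The map induced on `VEnd` by a family of linear maps. -/
def endMap (f : ∀ k, V k →ₗ[ℚ] W k) : VEnd V →ₗ[ℚ] VEnd W :=
  Submodule.mapQ _ _ (LinearMap.pi fun k => (f k).comp (LinearMap.proj k))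
    (by rintro x ⟨N, hN⟩; exact ⟨N, fun k hk => by simp [LinearMap.pi, hN k hk]⟩)

@[simp] lemma endMap_mk (f : ∀ k, V k →ₗ[ℚ] W k) (x : ∀ k, V k) :
    endMap f (VEnd.mk x) = VEnd.mk (fun k => f k (x k)) := rfl

@[simp] lemma endMap_id : endMap (fun k => (LinearMap.id : V k →ₗ[ℚ] V k)) = LinearMap.id := by
  refine Submodule.linearMap_qext _ ?_
  ext x
  rfl

lemma endMap_comp (f : ∀ k, V k →ₗ[ℚ] W k) (g : ∀ k, W k →ₗ[ℚ] U k) :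
    endMap (fun k => (g k).comp (f k)) = (endMap g).comp (endMap f) := by
  refine Submodule.linearMap_qext _ ?_
  ext x
  rfl

lemma endMap_add (f g : ∀ k, V k →ₗ[ℚ] W k) :
    endMap (fun k => f k + g k) = endMap f + endMap g := by
  refine Submodule.linearMap_qext _ ?_
  ext x
  show endMap _ (VEnd.mk x) = endMap f (VEnd.mk x) + endMap g (VEnd.mk x)
  simp only [endMap_mk]
  rw [← map_add]
  rfl

lemma endMap_smul (c : ℚ) (f : ∀ k, V k →ₗ[ℚ] W k) :
    endMap (fun k => c • f k) = c • endMap f := by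
  refine Submodule.linearMap_qext _ ?_
  ext x
  show endMap _ (VEnd.mk x) = c • endMap f (VEnd.mk x)
  simp only [endMap_mk]
  rw [← map_smul]
  rfl

lemma endMap_zero : endMap (fun k => (0 : V k →ₗ[ℚ] W k)) = 0 := by
  refine Submodule.linearMap_qext _ ?_
  ext x
  show endMap _ (VEnd.mk x) = 0
  simp only [endMap_mk]
  show VEnd.mk (fun _ => 0) = 0
  rw [← map_zero (VEnd.mk (V := W))]
  rfl

/-- An object of the algebraic model `𝒜(𝒟)` (in the ungraded setting): a rational vector
space `Vinf` (the stalk at `∞`, with trivial `ℤ/2`-action), rational vector spaces `V k`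
with a `ℤ/2`-action (given by the involution `w k`) for each `k`, and an equivariant
linear structure map `sig : Vinf → colim_n ∏_{k ≥ n} V k`. -/
structure AObj : Type (u + 1) where
  Vinf : Type u
  [addInf : AddCommGroup Vinf]
  [modInf : Module ℚ Vinf]
  V : ℕ → Type u
  [addV : ∀ k, AddCommGroup (V k)]
  [modV : ∀ k, Module ℚ (V k)]
  w : ∀ k, V k →ₗ[ℚ] V k
  w_sq : ∀ k, (w k).comp (w k) = LinearMap.id
  sig : Vinf →ₗ[ℚ] VEnd V
  sig_w : (endMap w).comp sig = sig

attribute [instance] AObj.addInf AObj.modInf AObj.addV AObj.modV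

/-- A morphism in the algebraic model: a linear map at `∞` and `ℤ/2`-equivariant linear
maps at each `k`, compatible with the structure maps. -/
@[ext] structure AHom (A B : AObj.{u}) : Type u where
  finf : A.Vinf →ₗ[ℚ] B.Vinf
  f : ∀ k, A.V k →ₗ[ℚ] B.V k
  equivar : ∀ k, (f k).comp (A.w k) = (B.w k).comp (f k)
  comm : (endMap f).comp A.sig = B.sig.comp finf

open CategoryTheory

instance : Category AObj.{u} where
  Hom := AHom
  id A := ⟨LinearMap.id, fun _ => LinearMap.id, fun k => by simp, by simp⟩
  comp {A B C} f g :=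
    ⟨g.finf.comp f.finf, fun k => (g.f k).comp (f.f k),
      fun k => by
        rw [LinearMap.comp_assoc, f.equivar k, ← LinearMap.comp_assoc, g.equivar k,
          LinearMap.comp_assoc],
      by
        rw [endMap_comp, LinearMap.comp_assoc, f.comm, ← LinearMap.comp_assoc, g.comm,
          LinearMap.comp_assoc]⟩
  id_comp f := by apply AHom.ext <;> rfl
  comp_id f := by apply AHom.ext <;> rfl
  assoc f g h := by apply AHom.ext <;> rfl

@[simp] lemma AHom_id_f (A : AObj) (k : ℕ) : AHom.f (𝟙 A) k = LinearMap.id := rfl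
@[simp] lemma AHom_id_finf (A : AObj) : AHom.finf (𝟙 A) = LinearMap.id := rfl
@[simp] lemma AHom_comp_f {A B C : AObj} (f : A ⟶ B) (g : B ⟶ C) (k : ℕ) :
    AHom.f (f ≫ g) k = (g.f k).comp (f.f k) := rfl
@[simp] lemma AHom_comp_finf {A B C : AObj} (f : A ⟶ B) (g : B ⟶ C) :
    AHom.finf (f ≫ g) = g.finf.comp f.finf := rfl

/-- Addition of morphisms (the hom-sets of `𝒜(𝒟)` are `ℚ`-vector spaces). -/
instance (A B : AObj) : Add (AHom A B) :=
  ⟨fun f g =>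
    ⟨f.finf + g.finf, fun k => f.f k + g.f k,
      fun k => by
        rw [LinearMap.add_comp, LinearMap.comp_add, f.equivar k, g.equivar k],
      by rw [endMap_add, LinearMap.add_comp, LinearMap.comp_add, f.comm, g.comm]⟩⟩

instance (A B : AObj) : Zero (AHom A B) :=
  ⟨⟨0, fun _ => 0, fun k => by simp, by rw [endMap_zero]; simp⟩⟩

instance (A B : AObj) : SMul ℚ (AHom A B) :=
  ⟨fun c f =>
    ⟨c • f.finf, fun k => c • f.f k,
      fun k => by rw [LinearMap.smul_comp, LinearMap.comp_smul, f.equivar k],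
      by rw [endMap_smul, LinearMap.smul_comp, LinearMap.comp_smul, f.comm]⟩⟩

open CategoryTheory Limits

/-- The stalk functor `p_k : 𝒜(𝒟) → ℚ-Mod` (forgetting the `ℤ/2`-action). -/
@[simps] def pkFun (k : ℕ) : AObj.{u} ⥤ ModuleCat.{u} ℚ where
  obj A := ModuleCat.of ℚ (A.V k)
  map φ := ModuleCat.ofHom (φ.f k)

/-- The stalk-at-`∞` functor `p_∞ : 𝒜(𝒟) → ℚ-Mod`. -/
@[simps] def pinfFun : AObj.{u} ⥤ ModuleCat.{u} ℚ where
  obj A := ModuleCat.of ℚ A.Vinf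
  map φ := ModuleCat.ofHom φ.finf

/-- The constant object `cM`: all stalks equal to `M` with trivial `ℤ/2`-action, and
structure map induced by the diagonal `M → ∏_k M`. -/
def cObj (M : Type u) [AddCommGroup M] [Module ℚ M] : AObj.{u} where
  Vinf := M
  V _ := M
  w _ := LinearMap.id
  w_sq _ := by simp
  sig := VEnd.mk.comp (LinearMap.pi fun _ => LinearMap.id)
  sig_w := by rw [endMap_id]; simp

/-- `⊞_N V`, the pullback of `V_∞ → colim_n ∏_{k ≥ n} V_k ← ∏_{k ≥ N} V_k`, realised as
the submodule of `V_∞ × ∏_k V_k` of pairs `(v, x)` with `σ(v) = [x]` and `x k = 0` for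
`k < N`.  (Stalks are indexed by `ℕ` starting at `0`, so the paper's `⊞_1` is `BoxPlus 0`
and the paper's `⊞_N` is `BoxPlus (N-1)`.) -/
def BoxPlus (N : ℕ) (A : AObj.{u}) : Submodule ℚ (A.Vinf × ∀ k, A.V k) where
  carrier := {p | A.sig p.1 = VEnd.mk p.2 ∧ ∀ k < N, p.2 k = 0}
  add_mem' := by
    rintro p q ⟨hp, hp'⟩ ⟨hq, hq'⟩
    refine ⟨?_, fun k hk => by simp [hp' k hk, hq' k hk]⟩
    show A.sig (p.1 + q.1) = VEnd.mk (p.2 + q.2)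
    rw [map_add, map_add, hp, hq]
  zero_mem' := by
    refine ⟨?_, fun k _ => rfl⟩
    show A.sig 0 = VEnd.mk 0
    simp
  smul_mem' := by
    rintro c p ⟨hp, hp'⟩
    refine ⟨?_, fun k hk => by simp [hp' k hk]⟩
    show A.sig (c • p.1) = VEnd.mk (c • p.2)
    rw [map_smul, map_smul, hp]

/-- The ambient linear map underlying the induced map `⊞_N A → ⊞_N B` of a morphism. -/
def boxAmbient {A B : AObj.{u}} (φ : A ⟶ B) :
    (A.Vinf × ∀ k, A.V k) →ₗ[ℚ] (B.Vinf × ∀ k, B.V k) :=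
  LinearMap.prodMap φ.finf (LinearMap.pi fun k => (φ.f k).comp (LinearMap.proj k))

lemma boxAmbient_mem {A B : AObj.{u}} (φ : A ⟶ B) (N : ℕ) {p : A.Vinf × ∀ k, A.V k}
    (hp : p ∈ BoxPlus N A) : boxAmbient φ p ∈ BoxPlus N B := by
  obtain ⟨h1, h2⟩ := hp
  constructor
  · show B.sig (φ.finf p.1) = VEnd.mk fun k => φ.f k (p.2 k)
    have := congrArg (fun g => g p.1) φ.comm.symm
    simp only [LinearMap.comp_apply] at this
    rw [this, h1, endMap_mk]
  · intro k hk
    show φ.f k (p.2 k) = 0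
    rw [h2 k hk, map_zero]

/-- The induced map `⊞_N A → ⊞_N B` of a morphism of `𝒜(𝒟)`. -/
def boxMap {A B : AObj.{u}} (φ : A ⟶ B) (N : ℕ) : BoxPlus N A →ₗ[ℚ] BoxPlus N B :=
  (boxAmbient φ).restrict fun _ hp => boxAmbient_mem φ N hp

/-- The involution (`ℤ/2`-action) on `⊞_N A`. -/
def wBox (A : AObj.{u}) (N : ℕ) : BoxPlus N A →ₗ[ℚ] BoxPlus N A :=
  boxMap (show A ⟶ A from
    ⟨LinearMap.id, A.w, fun k => rfl, by
      rw [A.sig_w]; rfl⟩) N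

/-- The `⊞_1 = BoxPlus 0` functor `𝒜(𝒟) → ℚ-Mod`. -/
@[simps] def box0Fun : AObj.{u} ⥤ ModuleCat.{u} ℚ where
  obj A := ModuleCat.of ℚ (BoxPlus 0 A)
  map φ := ModuleCat.ofHom (boxMap φ 0)
  map_id A := by
    refine ModuleCat.hom_ext (LinearMap.ext fun p => ?_)
    apply Subtype.ext
    rfl
  map_comp f g := by
    refine ModuleCat.hom_ext (LinearMap.ext fun p => ?_)
    apply Subtype.ext
    rfl

/-- The submodule of `(v, x)` with all `x k` fixed by the involutions. -/
def fixCond (A : AObj.{u}) : Submodule ℚ (A.Vinf × ∀ k, A.V k) where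
  carrier := {p | ∀ k, A.w k (p.2 k) = p.2 k}
  add_mem' := by
    intro p q hp hq k
    show A.w k (p.2 k + q.2 k) = _
    rw [map_add, hp k, hq k]
    rfl
  zero_mem' := by
    intro k
    show A.w k 0 = 0
    simp
  smul_mem' := by
    intro c p hp k
    show A.w k (c • p.2 k) = _
    rw [map_smul, hp k]
    rfl

/-- `(⊞_N V)^{ℤ/2}`, the `ℤ/2`-fixed points of `⊞_N V`. -/
def BoxW (N : ℕ) (A : AObj.{u}) : Submodule ℚ (A.Vinf × ∀ k, A.V k) :=
  BoxPlus N A ⊓ fixCond A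

lemma boxAmbient_memW {A B : AObj.{u}} (φ : A ⟶ B) (N : ℕ) {p : A.Vinf × ∀ k, A.V k}
    (hp : p ∈ BoxW N A) : boxAmbient φ p ∈ BoxW N B := by
  refine ⟨boxAmbient_mem φ N hp.1, fun k => ?_⟩
  show B.w k (φ.f k (p.2 k)) = φ.f k (p.2 k)
  have := congrArg (fun g => g (p.2 k)) (φ.equivar k)
  simp only [LinearMap.comp_apply] at this
  rw [← this, hp.2 k]

/-- The map induced on `ℤ/2`-fixed points of `⊞_N`. -/
def boxWMap {A B : AObj.{u}} (φ : A ⟶ B) (N : ℕ) : BoxW N A →ₗ[ℚ] BoxW N B :=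
  (boxAmbient φ).restrict fun _ hp => boxAmbient_memW φ N hp

/-- The functor `V ↦ (⊞_N V)^{ℤ/2}` from `𝒜(𝒟)` to `ℚ`-modules. -/
@[simps] def boxWFun (N : ℕ) : AObj.{u} ⥤ ModuleCat.{u} ℚ where
  obj A := ModuleCat.of ℚ (BoxW N A)
  map φ := ModuleCat.ofHom (boxWMap φ N)
  map_id A := by
    refine ModuleCat.hom_ext (LinearMap.ext fun p => ?_)
    apply Subtype.ext
    rfl
  map_comp f g := by
    refine ModuleCat.hom_ext (LinearMap.ext fun p => ?_)
    apply Subtype.ext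
    rfl

/-- The ambient map `(v, x) ↦ (v, x with coordinate N zeroed out)`. -/
def zeroAmbient (A : AObj.{u}) (N : ℕ) :
    (A.Vinf × ∀ k, A.V k) →ₗ[ℚ] (A.Vinf × ∀ k, A.V k) :=
  LinearMap.prodMap LinearMap.id
    (LinearMap.pi fun k => if k = N then 0 else LinearMap.proj k)

lemma zeroAmbient_mem (A : AObj.{u}) (N : ℕ) {p : A.Vinf × ∀ k, A.V k}
    (hp : p ∈ BoxW N A) : zeroAmbient A N p ∈ BoxW (N + 1) A := by
  obtain ⟨⟨h1, h2⟩, h3⟩ := hp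
  have hx : (zeroAmbient A N p).2 = fun k => if k = N then 0 else p.2 k := by
    funext k
    show (if k = N then (0 : (∀ j, A.V j) →ₗ[ℚ] A.V k) else LinearMap.proj k) p.2 = _
    split_ifs <;> rfl
  refine ⟨⟨?_, ?_⟩, ?_⟩
  · show A.sig p.1 = VEnd.mk (zeroAmbient A N p).2
    rw [h1, hx]
    show Submodule.Quotient.mk _ = Submodule.Quotient.mk _
    rw [Submodule.Quotient.eq]
    exact ⟨N + 1, fun k hk => by
      have : k ≠ N := by omega
      simp [this]⟩
  · intro k hk
    rw [hx]
    by_cases h : k = N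
    · simp [h]
    · have : k < N := by omega
      simp [h, h2 k this]
  · intro k
    rw [hx]
    by_cases h : k = N
    · simp [h]
    · simpa [h] using h3 k

/-- The natural transformation `(⊞_N)^{ℤ/2} ⟶ (⊞_{N+1})^{ℤ/2}` which zeroes out the
coordinate `N`. -/
@[simps] def zeroNatTrans (N : ℕ) : boxWFun.{u} N ⟶ boxWFun.{u} (N + 1) where
  app A := ModuleCat.ofHom ((zeroAmbient A N).restrict fun _ hp => zeroAmbient_mem A N hp)
  naturality A B φ := by
    refine ModuleCat.hom_ext (LinearMap.ext fun p => ?_)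
    obtain ⟨⟨v, x⟩, hp⟩ := p
    apply Subtype.ext
    apply Prod.ext
    · rfl
    · funext k
      show (if k = N then (0 : (∀ j, B.V j) →ₗ[ℚ] B.V k) else LinearMap.proj k)
          (fun j => φ.f j (x j)) =
        φ.f k ((if k = N then (0 : (∀ j, A.V j) →ₗ[ℚ] A.V k) else LinearMap.proj k) x)
      split_ifs <;> simp

section Statement7Proof

open CategoryTheory Limits

variable {J : Type u} [SmallCategory J] (F : J ⥤ AObj.{u})

noncomputable section

/-- Colimit of the stalks at `k`. -/
def CkM (k : ℕ) : ModuleCat.{u} ℚ := colimit (F ⋙ pkFun k)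

/-- Colimit of the stalks at `∞`. -/
def CinfM : ModuleCat.{u} ℚ := colimit (F ⋙ pinfFun)

/-- The involutions as a natural endo-transformation of the stalk diagram. -/
def wNat (k : ℕ) : (F ⋙ pkFun k) ⟶ (F ⋙ pkFun k) where
  app j := ModuleCat.ofHom ((F.obj j).w k)
  naturality j j' φ := ModuleCat.hom_ext ((F.map φ).equivar k).symm

/-- The structure map of the `j`-th object followed by pushing into the colimits. -/
def tau (j : J) : (F.obj j).Vinf →ₗ[ℚ] VEnd (fun k => ↥(CkM F k)) :=
  (endMap (V := (F.obj j).V) (W := fun k => ↥(CkM F k)) fun k => ((colimit.ι (F ⋙ pkFun k) j).hom :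
      (F.obj j).V k →ₗ[ℚ] ↥(CkM F k))).comp (F.obj j).sig

lemma iota_comp_inf {j j' : J} (φ : j ⟶ j') :
    (((colimit.ι (F ⋙ pinfFun) j').hom : (F.obj j').Vinf →ₗ[ℚ] ↥(CinfM F)).comp
      ((F.map φ).finf)) = (colimit.ι (F ⋙ pinfFun) j).hom :=
  congrArg ModuleCat.Hom.hom (colimit.w (F ⋙ pinfFun) φ)

lemma iota_comp (k : ℕ) {j j' : J} (φ : j ⟶ j') :
    (((colimit.ι (F ⋙ pkFun k) j').hom : (F.obj j').V k →ₗ[ℚ] ↥(CkM F k)).comp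
      ((F.map φ).f k)) = (colimit.ι (F ⋙ pkFun k) j).hom :=
  congrArg ModuleCat.Hom.hom (colimit.w (F ⋙ pkFun k) φ)

lemma tau_comm {j j' : J} (φ : j ⟶ j') : (tau F j').comp (F.map φ).finf = tau F j := by
  unfold tau
  rw [LinearMap.comp_assoc, ← (F.map φ).comm, ← LinearMap.comp_assoc]
  erw [← endMap_comp]
  have h : (fun k => (((colimit.ι (F ⋙ pkFun k) j').hom :
      (F.obj j').V k →ₗ[ℚ] ↥(CkM F k)).comp ((F.map φ).f k))) =
      fun k => ((colimit.ι (F ⋙ pkFun k) j).hom : (F.obj j).V k →ₗ[ℚ] ↥(CkM F k)) :=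
    funext fun k => iota_comp F k φ
  erw [h]

/-- The cocone defining the structure map of the colimit object. -/
def sigCoconeC : Cocone (F ⋙ pinfFun) where
  pt := ModuleCat.of ℚ (VEnd (fun k => ↥(CkM F k)))
  ι :=
    { app := fun j => ModuleCat.ofHom (tau F j)
      naturality := fun {j j'} φ => by
        simp only [Functor.const_obj_map, Category.comp_id]
        exact ModuleCat.hom_ext (tau_comm F φ) }

/-- The stalkwise colimit object of a diagram in `𝒜(𝒟)`. -/
def colimAObj : AObj.{u} where
  Vinf := CinfM F
  V k := CkM F k
  w k := (colimMap (wNat F k)).hom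
  w_sq k := by
    show (colimMap (wNat F k) ≫ colimMap (wNat F k)).hom = ModuleCat.Hom.hom (𝟙 (CkM F k))
    refine congrArg ModuleCat.Hom.hom ?_
    apply colimit.hom_ext
    intro j
    simp only [ι_colimMap_assoc, ι_colimMap, Category.comp_id]
    rw [← Category.assoc]
    rw [show (wNat F k).app j ≫ (wNat F k).app j = 𝟙 _ from
        ModuleCat.hom_ext ((F.obj j).w_sq k),
      Category.id_comp]
    exact (Category.comp_id _).symm
  sig := (colimit.desc (F ⋙ pinfFun) (sigCoconeC F)).hom
  sig_w := by
    show (colimit.desc (F ⋙ pinfFun) (sigCoconeC F) ≫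
      (show (sigCoconeC F).pt ⟶ (sigCoconeC F).pt from ModuleCat.ofHom
        (endMap (V := fun k => ↥(CkM F k)) (W := fun k => ↥(CkM F k))
          (fun k => ((colimMap (wNat F k)).hom : ↥(CkM F k) →ₗ[ℚ] ↥(CkM F k))) :
        _ →ₗ[ℚ] VEnd (fun k => ↥(CkM F k))))).hom = (colimit.desc (F ⋙ pinfFun) (sigCoconeC F)).hom
    refine congrArg ModuleCat.Hom.hom ?_
    apply colimit.hom_ext
    intro j
    rw [colimit.ι_desc_assoc, colimit.ι_desc]
    apply ModuleCat.hom_ext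
    show (endMap _).comp ((sigCoconeC F).ι.app j).hom = ((sigCoconeC F).ι.app j).hom
    show (endMap _).comp (tau F j) = tau F j
    unfold tau
    erw [← LinearMap.comp_assoc, ← endMap_comp]
    have hk : (fun k => ((colimMap (wNat F k)).hom : ↥(CkM F k) →ₗ[ℚ] ↥(CkM F k)).comp
        (colimit.ι (F ⋙ pkFun k) j).hom) = fun k =>
        (((colimit.ι (F ⋙ pkFun k) j).hom : (F.obj j).V k →ₗ[ℚ] ↥(CkM F k)).comp
          ((F.obj j).w k)) := by
      funext k
      exact congrArg ModuleCat.Hom.hom (ι_colimMap (wNat F k) j)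
    erw [hk]
    erw [endMap_comp, LinearMap.comp_assoc, (F.obj j).sig_w]
    rfl

/-- The colimit cocone in `𝒜(𝒟)`. -/
def colimCocone : Cocone F where
  pt := colimAObj F
  ι :=
    { app := fun j =>
        { finf := (colimit.ι (F ⋙ pinfFun) j).hom
          f := fun k => (colimit.ι (F ⋙ pkFun k) j).hom
          equivar := fun k => congrArg ModuleCat.Hom.hom (ι_colimMap (wNat F k) j).symm
          comm := congrArg ModuleCat.Hom.hom (colimit.ι_desc (sigCoconeC F) j).symm }
      naturality := fun {j j'} φ => by
        apply AHom.ext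
        · show ((colimit.ι (F ⋙ pinfFun) j').hom :
            (F.obj j').Vinf →ₗ[ℚ] ↥(CinfM F)).comp ((F.map φ).finf) = _
          rw [iota_comp_inf]
          rfl
        · funext k
          show ((colimit.ι (F ⋙ pkFun k) j').hom :
            (F.obj j').V k →ₗ[ℚ] ↥(CkM F k)).comp ((F.map φ).f k) = _
          rw [iota_comp]
          rfl }

/-- The cocone at `∞` induced by a cocone in `𝒜(𝒟)`. -/
def infCocone (s : Cocone F) : Cocone (F ⋙ pinfFun) where
  pt := ModuleCat.of ℚ s.pt.Vinf
  ι :=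
    { app := fun j => ModuleCat.ofHom (s.ι.app j).finf
      naturality := fun {j j'} φ => ModuleCat.hom_ext (congrArg AHom.finf (s.ι.naturality φ)) }

/-- The cocone at stalk `k` induced by a cocone in `𝒜(𝒟)`. -/
def kCocone (s : Cocone F) (k : ℕ) : Cocone (F ⋙ pkFun k) where
  pt := ModuleCat.of ℚ (s.pt.V k)
  ι :=
    { app := fun j => ModuleCat.ofHom ((s.ι.app j).f k)
      naturality := fun {j j'} φ =>
        ModuleCat.hom_ext (congrArg (fun h => AHom.f h k) (s.ι.naturality φ)) }

section Filtered

instance moduleCatQ_forget₂_preservesFilteredColimits :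
    PreservesFilteredColimits (forget₂ (ModuleCat.{u} ℚ) AddCommGrpCat.{u}) where
  preserves_filtered_colimits J' _ _ :=
  { preservesColimit := fun {G : J' ⥤ ModuleCat.{u} ℚ} =>
      preservesColimit_of_preserves_colimit_cocone
        (ModuleCat.FilteredColimits.colimitCoconeIsColimit G)
        (AddCommGrpCat.FilteredColimits.colimitCoconeIsColimit
          (G ⋙ forget₂ (ModuleCat.{u} ℚ) AddCommGrpCat.{u})) }

instance moduleCatQ_forget_preservesFilteredColimits :
    PreservesFilteredColimits (forget (ModuleCat.{u} ℚ)) :=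
  Limits.comp_preservesFilteredColimits (forget₂ (ModuleCat.{u} ℚ) AddCommGrpCat.{u})
    (forget AddCommGrpCat.{u})

variable [IsFiltered J]

lemma hom_ext_inf {M : Type u} [AddCommGroup M] [Module ℚ M]
    {a b : ↥(CinfM F) →ₗ[ℚ] M}
    (h : ∀ (j : J) (v : (F.obj j).Vinf),
      a (colimit.ι (F ⋙ pinfFun) j v) = b (colimit.ι (F ⋙ pinfFun) j v)) : a = b :=
  LinearMap.ext fun x => by
    obtain ⟨j, v, rfl⟩ := Concrete.colimit_exists_rep (F ⋙ pinfFun) x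
    exact h j v

lemma hom_ext_k {k : ℕ} {M : Type u} [AddCommGroup M] [Module ℚ M]
    {a b : ↥(CkM F k) →ₗ[ℚ] M}
    (h : ∀ (j : J) (v : (F.obj j).V k),
      a (colimit.ι (F ⋙ pkFun k) j v) = b (colimit.ι (F ⋙ pkFun k) j v)) : a = b :=
  LinearMap.ext fun x => by
    obtain ⟨j, v, rfl⟩ := Concrete.colimit_exists_rep (F ⋙ pkFun k) x
    exact h j v

/-- The morphism out of the colimit object induced by a cocone. -/
def descHom (s : Cocone F) : colimAObj F ⟶ s.pt where
  finf := (colimit.desc (F ⋙ pinfFun) (infCocone F s)).hom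
  f k := (colimit.desc (F ⋙ pkFun k) (kCocone F s k)).hom
  equivar k := by
    show (colimMap (wNat F k) ≫ colimit.desc (F ⋙ pkFun k) (kCocone F s k)).hom =
      (colimit.desc (F ⋙ pkFun k) (kCocone F s k) ≫
        (show (kCocone F s k).pt ⟶ (kCocone F s k).pt from
          ModuleCat.ofHom (s.pt.w k : (s.pt.V k : Type u) →ₗ[ℚ] s.pt.V k))).hom
    refine congrArg ModuleCat.Hom.hom ?_
    apply colimit.hom_ext
    intro j
    rw [ι_colimMap_assoc, colimit.ι_desc, colimit.ι_desc_assoc]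
    exact ModuleCat.hom_ext ((s.ι.app j).equivar k)
  comm := by
    apply hom_ext_inf F
    intro j v
    simp only [LinearMap.comp_apply]
    have h1 : (colimAObj F).sig (colimit.ι (F ⋙ pinfFun) j v) = tau F j v :=
      LinearMap.congr_fun (congrArg ModuleCat.Hom.hom (colimit.ι_desc (sigCoconeC F) j)) v
    have h2 : colimit.desc (F ⋙ pinfFun) (infCocone F s)
        (colimit.ι (F ⋙ pinfFun) j v) = (s.ι.app j).finf v :=
      LinearMap.congr_fun (congrArg ModuleCat.Hom.hom (colimit.ι_desc (infCocone F s) j)) v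
    refine Eq.trans (congrArg (endMap fun k => (colimit.desc (F ⋙ pkFun k) (kCocone F s k)).hom) h1)
      (Eq.trans ?_ (congrArg s.pt.sig h2.symm))
    show (endMap (V := fun k => ↥(CkM F k)) (W := s.pt.V)
        fun k => ((colimit.desc (F ⋙ pkFun k) (kCocone F s k)).hom :
        ↥(CkM F k) →ₗ[ℚ] s.pt.V k))
      ((endMap (V := (F.obj j).V) (W := fun k => ↥(CkM F k)) fun k => ((colimit.ι (F ⋙ pkFun k) j).hom :
        (F.obj j).V k →ₗ[ℚ] ↥(CkM F k))) ((F.obj j).sig v)) =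
      s.pt.sig ((s.ι.app j).finf v)
    erw [← LinearMap.comp_apply, ← endMap_comp]
    have h3 : (fun k => ((colimit.desc (F ⋙ pkFun k) (kCocone F s k)).hom :
        ↥(CkM F k) →ₗ[ℚ] s.pt.V k).comp (colimit.ι (F ⋙ pkFun k) j).hom) =
        fun k => (s.ι.app j).f k :=
      funext fun k => congrArg ModuleCat.Hom.hom (colimit.ι_desc (kCocone F s k) j)
    exact (congrArg (fun f => endMap f ((F.obj j).sig v)) h3).trans
      (LinearMap.congr_fun (s.ι.app j).comm v)

/-- The stalkwise colimit cocone is a colimit in `𝒜(𝒟)`. -/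
def colimIsColimit : IsColimit (colimCocone F) where
  desc s := descHom F s
  fac s j := by
    apply AHom.ext
    · exact congrArg ModuleCat.Hom.hom (colimit.ι_desc (infCocone F s) j)
    · funext k
      exact congrArg ModuleCat.Hom.hom (colimit.ι_desc (kCocone F s k) j)
  uniq s m hm := by
    apply AHom.ext
    · apply hom_ext_inf F
      intro j v
      have h2 : colimit.desc (F ⋙ pinfFun) (infCocone F s)
          (colimit.ι (F ⋙ pinfFun) j v) = (s.ι.app j).finf v :=
        LinearMap.congr_fun (congrArg ModuleCat.Hom.hom (colimit.ι_desc (infCocone F s) j)) v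
      refine Eq.trans ?_ h2.symm
      exact LinearMap.congr_fun (congrArg AHom.finf (hm j)) v
    · funext k
      apply hom_ext_k F
      intro j v
      have h2 : colimit.desc (F ⋙ pkFun k) (kCocone F s k)
          (colimit.ι (F ⋙ pkFun k) j v) = (s.ι.app j).f k v :=
        LinearMap.congr_fun (congrArg ModuleCat.Hom.hom (colimit.ι_desc (kCocone F s k) j)) v
      refine Eq.trans ?_ h2.symm
      exact LinearMap.congr_fun (congrArg (fun h => AHom.f h k) (hm j)) v

lemma iota_push (k : ℕ) {j j' : J} (g : j ⟶ j') (v : (F.obj j).V k) :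
    colimit.ι (F ⋙ pkFun k) j' ((F.map g).f k v) = colimit.ι (F ⋙ pkFun k) j v :=
  congrArg (fun h : (F.obj j).V k →ₗ[ℚ] ↥(CkM F k) => h v) (iota_comp F k g)

lemma iota_push_inf {j j' : J} (g : j ⟶ j') (v : (F.obj j).Vinf) :
    colimit.ι (F ⋙ pinfFun) j' ((F.map g).finf v) = colimit.ι (F ⋙ pinfFun) j v :=
  congrArg (fun h : (F.obj j).Vinf →ₗ[ℚ] ↥(CinfM F) => h v) (iota_comp_inf F g)

/-- Finitely many elements of the stalkwise colimits can be lifted to a common stage. -/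
lemma lift_finitely (N : ℕ) (j : J) (x : ∀ k, ↥(CkM F k)) :
    ∃ (j' : J) (g : j ⟶ j') (z : ∀ k, (F.obj j').V k),
      ∀ k, k < N → colimit.ι (F ⋙ pkFun k) j' (z k) = x k := by
  induction N with
  | zero => exact ⟨j, 𝟙 j, fun k => 0, fun k hk => absurd hk (Nat.not_lt_zero k)⟩
  | succ N ih =>
    obtain ⟨j', g, z, hz⟩ := ih
    obtain ⟨i, u, hu⟩ := Concrete.colimit_exists_rep (F ⋙ pkFun N) (x N)
    refine ⟨IsFiltered.max j' i, g ≫ IsFiltered.leftToMax j' i,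
      fun k => if h : k = N then
          (F.map (IsFiltered.rightToMax j' i)).f k (h ▸ u)
        else (F.map (IsFiltered.leftToMax j' i)).f k (z k), fun k hk => ?_⟩
    dsimp only
    rcases Nat.lt_succ_iff_lt_or_eq.mp hk with h | h
    · have hne : k ≠ N := Nat.ne_of_lt h
      rw [dif_neg hne, iota_push]
      exact hz k h
    · subst h
      rw [dif_pos rfl, iota_push]
      exact hu

/-- Two elements at the same stage which agree in the colimit agree at a later stage. -/
lemma eq_later {k : ℕ} {j : J} (a b : (F.obj j).V k)
    (h : colimit.ι (F ⋙ pkFun k) j a = colimit.ι (F ⋙ pkFun k) j b) :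
    ∃ (j' : J) (g : j ⟶ j'), (F.map g).f k a = (F.map g).f k b := by
  obtain ⟨m, f1, f2, hf⟩ := Concrete.colimit_exists_of_rep_eq (F ⋙ pkFun k) _ _ h
  refine ⟨IsFiltered.coeq f1 f2, f1 ≫ IsFiltered.coeqHom f1 f2, ?_⟩
  have h2 : f1 ≫ IsFiltered.coeqHom f1 f2 = f2 ≫ IsFiltered.coeqHom f1 f2 :=
    IsFiltered.coeq_condition f1 f2
  have hf' : (F.map f1).f k a = (F.map f2).f k b := hf
  calc (F.map (f1 ≫ IsFiltered.coeqHom f1 f2)).f k a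
      = (F.map (IsFiltered.coeqHom f1 f2)).f k ((F.map f1).f k a) := by
        rw [F.map_comp]; rfl
    _ = (F.map (IsFiltered.coeqHom f1 f2)).f k ((F.map f2).f k b) := by rw [hf']
    _ = (F.map (f2 ≫ IsFiltered.coeqHom f1 f2)).f k b := by rw [F.map_comp]; rfl
    _ = (F.map (f1 ≫ IsFiltered.coeqHom f1 f2)).f k b := by rw [h2]

/-- Finitely many coordinatewise equalities in the colimit hold at a common later stage. -/
lemma merge_finitely (N : ℕ) (j : J) (a b : ∀ k, (F.obj j).V k)
    (hab : ∀ k, k < N →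
      colimit.ι (F ⋙ pkFun k) j (a k) = colimit.ι (F ⋙ pkFun k) j (b k)) :
    ∃ (j' : J) (g : j ⟶ j'), ∀ k, k < N → (F.map g).f k (a k) = (F.map g).f k (b k) := by
  induction N with
  | zero => exact ⟨j, 𝟙 j, fun k hk => absurd hk (Nat.not_lt_zero k)⟩
  | succ N ih =>
    obtain ⟨j', g, hg⟩ := ih (fun k hk => hab k (Nat.lt_succ_of_lt hk))
    have hN : colimit.ι (F ⋙ pkFun N) j' ((F.map g).f N (a N)) =
        colimit.ι (F ⋙ pkFun N) j' ((F.map g).f N (b N)) := by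
      rw [iota_push, iota_push]
      exact hab N (Nat.lt_succ_self N)
    obtain ⟨j'', g₂, hg₂⟩ := eq_later F _ _ hN
    refine ⟨j'', g ≫ g₂, fun k hk => ?_⟩
    have hcomp : ∀ (v : (F.obj j).V k),
        (F.map (g ≫ g₂)).f k v = (F.map g₂).f k ((F.map g).f k v) := by
      intro v; rw [F.map_comp]; rfl
    rw [hcomp, hcomp]
    rcases Nat.lt_succ_iff_lt_or_eq.mp hk with h | h
    · rw [hg k h]
    · subst h
      exact hg₂

/-- Every element of `⊞_1` of the colimit comes from a finite stage. -/
lemma box_jointly_surj (p : BoxPlus 0 (colimAObj F)) :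
    ∃ (j : J) (q : BoxPlus 0 (F.obj j)),
      boxMap ((colimCocone F).ι.app j) 0 q = p := by
  obtain ⟨⟨v, x⟩, hp⟩ := p
  have hp1 : (colimAObj F).sig v = VEnd.mk x := hp.1
  obtain ⟨j, (v₀ : (F.obj j).Vinf), hv⟩ := Concrete.colimit_exists_rep (F ⋙ pinfFun) v
  obtain ⟨y, hy⟩ : ∃ y, VEnd.mk y = (F.obj j).sig v₀ :=
    Submodule.mkQ_surjective (evZero (F.obj j).V) ((F.obj j).sig v₀)
  have hsig : (colimAObj F).sig v =
      endMap (V := (F.obj j).V) (W := fun k => ↥(CkM F k)) (fun k => ((colimit.ι (F ⋙ pkFun k) j).hom :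
        (F.obj j).V k →ₗ[ℚ] ↥(CkM F k))) ((F.obj j).sig v₀) := by
    rw [← hv]
    exact LinearMap.congr_fun (congrArg ModuleCat.Hom.hom (colimit.ι_desc (sigCoconeC F) j)) v₀
  have hxy : VEnd.mk x =
      VEnd.mk (fun k => colimit.ι (F ⋙ pkFun k) j (y k)) := by
    rw [← hp1, hsig, ← hy]
    exact endMap_mk _ y
  obtain ⟨N, hN⟩ := (Submodule.Quotient.eq (evZero (colimAObj F).V)).mp hxy
  obtain ⟨j', g, z, hz⟩ := lift_finitely F N j x
  refine ⟨j', ⟨((F.map g).finf v₀,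
    fun k => if k < N then z k else (F.map g).f k (y k)), ?_,
    fun k hk => absurd hk (Nat.not_lt_zero k)⟩, ?_⟩
  · have h1 : (F.obj j').sig ((F.map g).finf v₀) =
        VEnd.mk (fun k => (F.map g).f k (y k)) := by
      have hc := LinearMap.congr_fun (F.map g).comm v₀
      simp only [LinearMap.comp_apply] at hc
      rw [← hy] at hc
      exact hc.symm.trans (endMap_mk _ y)
    show (F.obj j').sig ((F.map g).finf v₀) = VEnd.mk _
    rw [h1]
    apply (Submodule.Quotient.eq _).mpr
    refine ⟨N, fun k hk => ?_⟩
    have heq : (if k < N then z k else (F.map g).f k (y k)) = (F.map g).f k (y k) :=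
      if_neg (Nat.not_lt.mpr hk)
    show (F.map g).f k (y k) - (if k < N then z k else (F.map g).f k (y k)) = 0
    rw [heq, sub_self]
  · apply Subtype.ext
    apply Prod.ext
    · show colimit.ι (F ⋙ pinfFun) j' ((F.map g).finf v₀) = v
      rw [iota_push_inf]
      exact hv
    · funext k
      show colimit.ι (F ⋙ pkFun k) j'
        ((if k < N then z k else (F.map g).f k (y k) : (F.obj j').V k)) = x k
      by_cases h : k < N
      · rw [if_pos h]
        exact hz k h
      · rw [if_neg h, iota_push]
        have h0 := hN k (Nat.not_lt.mp h)
        exact (sub_eq_zero.mp h0).symm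

/-- Two stage-wise elements of `⊞_1` with the same image in the colimit are identified
at a later stage. -/
lemma box_merge {j j' : J} (q : BoxPlus 0 (F.obj j)) (q' : BoxPlus 0 (F.obj j'))
    (h : boxMap ((colimCocone F).ι.app j) 0 q =
      boxMap ((colimCocone F).ι.app j') 0 q') :
    ∃ (m : J) (f : j ⟶ m) (f' : j' ⟶ m),
      boxMap (F.map f) 0 q = boxMap (F.map f') 0 q' := by
  obtain ⟨⟨v, x⟩, hq⟩ := q
  obtain ⟨⟨v', x'⟩, hq'⟩ := q'
  have h1 : colimit.ι (F ⋙ pinfFun) j v = colimit.ι (F ⋙ pinfFun) j' v' :=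
    congrArg (fun r => r.1.1) h
  have h2 : ∀ k, colimit.ι (F ⋙ pkFun k) j (x k) =
      colimit.ι (F ⋙ pkFun k) j' (x' k) :=
    fun k => congrFun (congrArg (fun r => r.1.2) h) k
  obtain ⟨m₀, f, f', hf⟩ := Concrete.colimit_exists_of_rep_eq (F ⋙ pinfFun) _ _ h1
  have hf' : (F.map f).finf v = (F.map f').finf v' := hf
  have ha : (F.obj m₀).sig ((F.map f).finf v) =
      VEnd.mk (fun k => (F.map f).f k (x k)) := by
    have hc := LinearMap.congr_fun (F.map f).comm v
    simp only [LinearMap.comp_apply] at hc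
    rw [hq.1] at hc
    exact hc.symm.trans (endMap_mk _ x)
  have hb : (F.obj m₀).sig ((F.map f').finf v') =
      VEnd.mk (fun k => (F.map f').f k (x' k)) := by
    have hc := LinearMap.congr_fun (F.map f').comm v'
    simp only [LinearMap.comp_apply] at hc
    rw [hq'.1] at hc
    exact hc.symm.trans (endMap_mk _ x')
  have hab : VEnd.mk (fun k => (F.map f).f k (x k)) =
      VEnd.mk (fun k => (F.map f').f k (x' k)) := by
    rw [← ha, ← hb, hf']
  obtain ⟨N, hN⟩ := (Submodule.Quotient.eq _).mp hab
  obtain ⟨m, g, hg⟩ := merge_finitely F N m₀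
    (fun k => (F.map f).f k (x k)) (fun k => (F.map f').f k (x' k))
    (fun k _ => by rw [iota_push, iota_push]; exact h2 k)
  refine ⟨m, f ≫ g, f' ≫ g, ?_⟩
  apply Subtype.ext
  apply Prod.ext
  · show (F.map (f ≫ g)).finf v = (F.map (f' ≫ g)).finf v'
    rw [F.map_comp, F.map_comp]
    show (F.map g).finf ((F.map f).finf v) = (F.map g).finf ((F.map f').finf v')
    rw [hf']
  · funext k
    show (F.map (f ≫ g)).f k (x k) = (F.map (f' ≫ g)).f k (x' k)
    rw [F.map_comp, F.map_comp]
    show (F.map g).f k ((F.map f).f k (x k)) = (F.map g).f k ((F.map f').f k (x' k))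
    by_cases hk : k < N
    · exact hg k hk
    · have h0 := hN k (Nat.not_lt.mp hk)
      have h1 : (F.map f).f k (x k) - (F.map f').f k (x' k) = 0 := h0
      rw [sub_eq_zero] at h1
      rw [h1]

lemma box_push {j m : J} (f : j ⟶ m) (q : BoxPlus 0 (F.obj j)) :
    boxMap ((colimCocone F).ι.app m) 0 (boxMap (F.map f) 0 q) =
      boxMap ((colimCocone F).ι.app j) 0 q := by
  have hw : F.map f ≫ (colimCocone F).ι.app m = (colimCocone F).ι.app j :=
    (colimCocone F).w f
  have h1 : box0Fun.map (F.map f ≫ (colimCocone F).ι.app m) =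
      box0Fun.map ((colimCocone F).ι.app j) := congrArg _ hw
  have h2 := box0Fun.map_comp (F.map f) ((colimCocone F).ι.app m)
  exact congrArg (fun t => ModuleCat.Hom.hom t q) (h2.symm.trans h1)

variable (s : Cocone (F ⋙ box0Fun))

/-- The underlying function of the descent map out of `⊞_1` of the colimit. -/
def descFun (p : BoxPlus 0 (colimAObj F)) : ↥(s.pt) :=
  s.ι.app (box_jointly_surj F p).choose (box_jointly_surj F p).choose_spec.choose

lemma descFun_spec {j : J} (q : BoxPlus 0 (F.obj j)) :
    descFun F s (boxMap ((colimCocone F).ι.app j) 0 q) = s.ι.app j q := by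
  obtain ⟨m, f, f', hm⟩ := box_merge F _ _
    ((box_jointly_surj F (boxMap ((colimCocone F).ι.app j) 0 q)).choose_spec.choose_spec)
  have w1 : s.ι.app m (boxMap (F.map f) 0
      (box_jointly_surj F
        (boxMap ((colimCocone F).ι.app j) 0 q)).choose_spec.choose) =
      s.ι.app (box_jointly_surj F (boxMap ((colimCocone F).ι.app j) 0 q)).choose
        (box_jointly_surj F (boxMap ((colimCocone F).ι.app j) 0 q)).choose_spec.choose :=
    LinearMap.congr_fun (congrArg ModuleCat.Hom.hom (s.w f)) _
  have w2 : s.ι.app m (boxMap (F.map f') 0 q) = s.ι.app j q :=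
    LinearMap.congr_fun (congrArg ModuleCat.Hom.hom (s.w f')) q
  calc descFun F s (boxMap ((colimCocone F).ι.app j) 0 q)
      = s.ι.app (box_jointly_surj F (boxMap ((colimCocone F).ι.app j) 0 q)).choose
        (box_jointly_surj F (boxMap ((colimCocone F).ι.app j) 0 q)).choose_spec.choose := rfl
    _ = s.ι.app m (boxMap (F.map f) 0 _) := w1.symm
    _ = s.ι.app m (boxMap (F.map f') 0 q) := by rw [hm]
    _ = s.ι.app j q := w2

lemma descFun_beta {j : J} (q : BoxPlus 0 (F.obj j)) {p : BoxPlus 0 (colimAObj F)}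
    (hpq : boxMap ((colimCocone F).ι.app j) 0 q = p) :
    descFun F s p = s.ι.app j q := by
  rw [← hpq, descFun_spec]

lemma descFun_add (p₁ p₂ : BoxPlus 0 (colimAObj F)) :
    descFun F s (p₁ + p₂) = descFun F s p₁ + descFun F s p₂ := by
  obtain ⟨j₁, q₁, h₁⟩ := box_jointly_surj F p₁
  obtain ⟨j₂, q₂, h₂⟩ := box_jointly_surj F p₂
  set m := IsFiltered.max j₁ j₂
  set r₁ := boxMap (F.map (IsFiltered.leftToMax j₁ j₂)) 0 q₁ with hr₁def
  set r₂ := boxMap (F.map (IsFiltered.rightToMax j₁ j₂)) 0 q₂ with hr₂def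
  have hr₁ : boxMap ((colimCocone F).ι.app m) 0 r₁ = p₁ := by
    rw [hr₁def, box_push]; exact h₁
  have hr₂ : boxMap ((colimCocone F).ι.app m) 0 r₂ = p₂ := by
    rw [hr₂def, box_push]; exact h₂
  have hr : boxMap ((colimCocone F).ι.app m) 0 (r₁ + r₂) = p₁ + p₂ := by
    rw [map_add, hr₁, hr₂]
    rfl
  rw [descFun_beta F s _ hr, descFun_beta F s _ hr₁, descFun_beta F s _ hr₂]
  exact map_add (s.ι.app m).hom r₁ r₂

lemma descFun_smul (c : ℚ) (p : BoxPlus 0 (colimAObj F)) :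
    descFun F s (c • p) = c • descFun F s p := by
  obtain ⟨j, q, hq⟩ := box_jointly_surj F p
  have hr : boxMap ((colimCocone F).ι.app j) 0 (c • q) = c • p := by
    rw [map_smul, hq]
    rfl
  rw [descFun_beta F s _ hr, descFun_beta F s _ hq]
  exact map_smul (s.ι.app j).hom c q

/-- `⊞_1` maps the colimit cocone to a colimit cocone. -/
def mapIsColimit : IsColimit (box0Fun.{u}.mapCocone (colimCocone F)) where
  desc s := ModuleCat.ofHom
    { toFun := descFun F s
      map_add' := descFun_add F s
      map_smul' := descFun_smul F s }
  fac s j := ModuleCat.hom_ext (LinearMap.ext fun q => descFun_spec F s q)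
  uniq s m hm := ModuleCat.hom_ext (LinearMap.ext fun p => by
    obtain ⟨j, q, rfl⟩ := box_jointly_surj F p
    exact (LinearMap.congr_fun (congrArg ModuleCat.Hom.hom (hm j)) q).trans (descFun_spec F s q).symm)

end Filtered

end

end Statement7Proof

/-- the global-sections functor `⊞_1 = BoxPlus 0 : 𝒜(𝒟) → Mod` (sending
`V` to the pullback of `V_∞ → colim_n ∏_{k ≥ n} V_k ← ∏_{k ≥ 1} V_k`, with its
`ℤ/2`-action) preserves filtered colimits. -/
theorem statement7 :
    ∀ (J : Type u) [inst : SmallCategory J] [inst2 : IsFiltered J],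
      Nonempty (PreservesColimitsOfShape J box0Fun.{u}) := by
  intro J _ _
  exact ⟨⟨fun {F} =>
    preservesColimit_of_preserves_colimit_cocone (colimIsColimit F) (mapIsColimit F)⟩⟩
end

section
/- For a filtered diagram (V^i) in the category A, the canonical map colim_i ⊞_1 V^i → ⊞_1 (colim_i V^i) is injective: if an element (v_∞, v_1, v_2, ...) of ⊞_1 V^j maps to zero in ⊞_1 colim_i V^i, then it maps to zero in colim_i ⊞_1 V^i. -/
open scoped TensorProduct

universe u

variable {V W U : ℕ → Type u}
  [∀ k, AddCommGroup (V k)] [∀ k, Module ℚ (V k)]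
  [∀ k, AddCommGroup (W k)] [∀ k, Module ℚ (W k)]
  [∀ k, AddCommGroup (U k)] [∀ k, Module ℚ (U k)]

open CategoryTheory

open CategoryTheory Limits

/-! ### Auxiliary material for Statement 8 -/

section Statement8Aux

open CategoryTheory Limits

lemma VEnd.mk_eq_zero_iff {x : ∀ k, V k} :
    VEnd.mk x = 0 ↔ ∃ N, ∀ k, N ≤ k → x k = 0 :=
  Submodule.Quotient.mk_eq_zero _

lemma forget_preservesColimit_moduleCat {J : Type u} [SmallCategory J] [IsFiltered J]
    (G : J ⥤ ModuleCat.{u} ℚ) :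
    PreservesColimit G (CategoryTheory.forget (ModuleCat.{u} ℚ)) := by
  have h : PreservesColimit G
      (forget₂ (ModuleCat.{u} ℚ) AddCommGrpCat.{u} ⋙ CategoryTheory.forget AddCommGrpCat.{u}) :=
    inferInstance
  exact (HasForget₂.forget_comp (C := ModuleCat.{u} ℚ) (D := AddCommGrpCat.{u})) ▸ h

/-- The object of `𝒜(𝒟)` with `Vinf = M` and all other stalks trivial. -/
def constInf (M : Type u) [AddCommGroup M] [Module ℚ M] : AObj.{u} where
  Vinf := M
  V _ := PUnit
  w _ := LinearMap.id
  w_sq _ := by simp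
  sig := 0
  sig_w := LinearMap.comp_zero _

/-- A morphism into `constInf M` out of any linear map on the `∞`-stalk. -/
def constInfHom {A : AObj.{u}} {M : Type u} [AddCommGroup M] [Module ℚ M]
    (g : A.Vinf →ₗ[ℚ] M) : A ⟶ constInf M where
  finf := g
  f _ := 0
  equivar _ := LinearMap.ext fun _ => rfl
  comm := by rw [endMap_zero, LinearMap.zero_comp]; rfl

/-- If the image of `v` at the `∞`-stalk of the colimit vanishes, it already vanishes
at some finite stage. -/
lemma exists_map_finf_eq_zero {J : Type u} [SmallCategory J] [IsFiltered J]
    (F : J ⥤ AObj.{u}) (c : Cocone F) (hc : IsColimit c) (j : J) (v : (F.obj j).Vinf)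
    (hv : (c.ι.app j).finf v = 0) :
    ∃ (j' : J) (f : j ⟶ j'), (F.map f).finf v = 0 := by
  classical
  let G := F ⋙ pinfFun.{u}
  let s : Cocone F :=
    { pt := constInf (colimit G).carrier
      ι :=
        { app := fun i => constInfHom (M := (colimit G).carrier) (colimit.ι G i).hom
          naturality := fun i i' u => by
            refine AHom.ext ?_ ?_
            · show (colimit.ι G i').hom.comp ((F.map u).finf) = _
              exact congrArg ModuleCat.Hom.hom (colimit.w G u)
            · funext k
              exact LinearMap.ext fun _ => rfl } }
  haveI : PreservesColimit G (forget (ModuleCat.{u} ℚ)) := forget_preservesColimit_moduleCat G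
  have fac := hc.fac s j
  have h1 : ((hc.desc s).finf).comp ((c.ι.app j).finf) = (colimit.ι G j).hom :=
    congrArg AHom.finf fac
  have h2 : (colimit.ι G j).hom v = 0 := by
    rw [← h1]
    show (hc.desc s).finf ((c.ι.app j).finf v) = 0
    rw [hv, map_zero]
  exact Concrete.colimit_rep_eq_zero (F := G) (j := j) (x := v) (hx := h2)

/-- The coinduced object at the stalk `k`: `V k = M × M` with the swap action,
all other stalks trivial. -/
def coindObj (k : ℕ) (M : Type u) [AddCommGroup M] [Module ℚ M] : AObj.{u} where
  Vinf := PUnit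
  V k' := PLift (k' = k) → M × M
  w k' := LinearMap.pi fun h =>
    ((LinearMap.snd ℚ M M).prod (LinearMap.fst ℚ M M)).comp (LinearMap.proj h)
  w_sq k' := LinearMap.ext fun v => funext fun h => rfl
  sig := 0
  sig_w := LinearMap.comp_zero _

lemma coind_vend_eq (k : ℕ) (M : Type u) [AddCommGroup M] [Module ℚ M]
    (x y : VEnd ((coindObj k M).V)) : x = y := by
  obtain ⟨x, rfl⟩ := Submodule.Quotient.mk_surjective _ x
  obtain ⟨y, rfl⟩ := Submodule.Quotient.mk_surjective _ y
  refine (Submodule.Quotient.eq _).mpr ?_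
  refine ⟨k + 1, fun k' hk' => ?_⟩
  funext h
  exact absurd h.down (by omega)

/-- Transport along an equality of indices, as a linear map. -/
def castLin (A : AObj.{u}) {a b : ℕ} (h : a = b) : A.V a →ₗ[ℚ] A.V b := by
  subst h; exact LinearMap.id

@[simp] lemma castLin_rfl (A : AObj.{u}) (a : ℕ) : castLin A (rfl : a = a) = LinearMap.id := rfl

/-- A morphism into `coindObj k M` out of any linear map on the stalk `k`. -/
def coindHom {A : AObj.{u}} {M : Type u} [AddCommGroup M] [Module ℚ M] (k : ℕ)
    (g : A.V k →ₗ[ℚ] M) : A ⟶ coindObj k M where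
  finf := 0
  f k' := LinearMap.pi fun (h : PLift (k' = k)) =>
    (g.prod (g.comp (A.w k))).comp (castLin A h.down)
  equivar k' := by
    refine LinearMap.ext fun v => funext fun h => ?_
    obtain ⟨h⟩ := h
    subst h
    refine Prod.ext rfl ?_
    show g (A.w k' (A.w k' v)) = g v
    rw [show A.w k' (A.w k' v) = v from LinearMap.congr_fun (A.w_sq k') v]
  comm := LinearMap.ext fun v => coind_vend_eq k M _ _

/-- If the image of `v` at the stalk `k` of the colimit vanishes, it already vanishes
at some finite stage. -/
lemma exists_map_f_eq_zero {J : Type u} [SmallCategory J] [IsFiltered J]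
    (F : J ⥤ AObj.{u}) (c : Cocone F) (hc : IsColimit c) (k : ℕ) (j : J)
    (v : (F.obj j).V k) (hv : (c.ι.app j).f k v = 0) :
    ∃ (j' : J) (f : j ⟶ j'), (F.map f).f k v = 0 := by
  classical
  let G := F ⋙ pkFun.{u} k
  let s : Cocone F :=
    { pt := coindObj k (colimit G).carrier
      ι :=
        { app := fun i => coindHom (M := (colimit G).carrier) k (colimit.ι G i).hom
          naturality := fun i i' u => by
            refine AHom.ext ?_ ?_
            · exact LinearMap.ext fun _ => rfl
            · funext k'
              refine LinearMap.ext fun w => funext fun h => ?_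
              obtain ⟨h⟩ := h
              subst h
              refine Prod.ext ?_ ?_
              · exact colimit.w_apply G u w
              · show colimit.ι G i' ((F.obj i').w k' ((F.map u).f k' w)) = _
                have he := LinearMap.congr_fun ((F.map u).equivar k') w
                simp only [LinearMap.comp_apply] at he
                rw [← he]
                exact colimit.w_apply G u ((F.obj i).w k' w) } }
  haveI : PreservesColimit G (forget (ModuleCat.{u} ℚ)) := forget_preservesColimit_moduleCat G
  have fac := hc.fac s j
  have h1 : ((hc.desc s).f k).comp ((c.ι.app j).f k)
      = (coindHom (M := (colimit G).carrier) k (colimit.ι G j).hom).f k :=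
    congrArg (fun φ => AHom.f φ k) fac
  have h2 : (coindHom (M := (colimit G).carrier) k (colimit.ι G j).hom).f k v = 0 := by
    rw [← h1]
    show (hc.desc s).f k ((c.ι.app j).f k v) = 0
    rw [hv, map_zero]
  have h3 : colimit.ι G j v = 0 := congrArg Prod.fst (congrFun h2 ⟨rfl⟩)
  exact Concrete.colimit_rep_eq_zero (F := G) (j := j) (x := v) (hx := h3)

end Statement8Aux

/-- for a filtered diagram `(V^i)` in `𝒜(𝒟)` with colimit cocone `c`,
the canonical map `colim_i ⊞_1 V^i → ⊞_1 (colim_i V^i)` is injective: an element of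
some `⊞_1 V^j` which maps to zero in `⊞_1 colim_i V^i` is already zero in
`colim_i ⊞_1 V^i`. -/
theorem statement8 (J : Type u) [SmallCategory J] [IsFiltered J] (F : J ⥤ AObj.{u})
    (c : Cocone F) (hc : IsColimit c) :
    Function.Injective
      (colimit.desc (F ⋙ box0Fun.{u}) (box0Fun.{u}.mapCocone c)) := by
  
  classical
  haveI : PreservesColimit (F ⋙ box0Fun.{u}) (forget (ModuleCat.{u} ℚ)) :=
    forget_preservesColimit_moduleCat _
  rw [injective_iff_map_eq_zero]
  intro a ha
  obtain ⟨j, x, rfl⟩ := Concrete.colimit_exists_rep (F ⋙ box0Fun.{u}) a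
  -- the image of `x` in the box-plus of the colimit vanishes
  have hx : boxMap (c.ι.app j) 0 x = 0 := by
    have h := LinearMap.congr_fun
      (congrArg ModuleCat.Hom.hom (colimit.ι_desc (box0Fun.{u}.mapCocone c) j)) x
    exact h.symm.trans ha
  have hval : boxAmbient (c.ι.app j) x.val = 0 := congrArg Subtype.val hx
  have hinf : (c.ι.app j).finf x.val.1 = 0 := congrArg Prod.fst hval
  have hk : ∀ k, (c.ι.app j).f k (x.val.2 k) = 0 :=
    fun k => congrFun (congrArg Prod.snd hval) k
  -- kill the infinity-component at a finite stage
  obtain ⟨j₁, f₀, hf₀⟩ := exists_map_finf_eq_zero F c hc j x.val.1 hinf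
  -- the pushed-forward sequence is eventually zero
  have hy0 : VEnd.mk (fun k => (F.map f₀).f k (x.val.2 k)) = 0 := by
    have hx1 : (F.obj j).sig x.val.1 = VEnd.mk x.val.2 := x.2.1
    have hcm := LinearMap.congr_fun (F.map f₀).comm x.val.1
    simp only [LinearMap.comp_apply] at hcm
    rw [hx1, endMap_mk] at hcm
    rw [hcm, hf₀, map_zero]
  obtain ⟨N, hN⟩ := VEnd.mk_eq_zero_iff.mp hy0
  -- the pushed-forward stalks still die in the colimit
  have hky : ∀ k, (c.ι.app j₁).f k ((F.map f₀).f k (x.val.2 k)) = 0 := by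
    intro k
    have h2 := congrArg (fun φ => AHom.f φ k) (c.w f₀)
    have h3 := LinearMap.congr_fun h2 (x.val.2 k)
    exact h3.trans (hk k)
  -- kill the finitely many remaining stalks
  have main : ∀ n : ℕ, ∃ (m : J) (h : j₁ ⟶ m),
      ∀ k, k < n → (F.map h).f k ((F.map f₀).f k (x.val.2 k)) = 0 := by
    intro n
    induction n with
    | zero => exact ⟨j₁, 𝟙 j₁, fun k hk => absurd hk (by omega)⟩
    | succ n ih =>
      obtain ⟨m, h, hm⟩ := ih
      have hz : (c.ι.app m).f n ((F.map h).f n ((F.map f₀).f n (x.val.2 n))) = 0 := by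
        have h2 := congrArg (fun φ => AHom.f φ n) (c.w h)
        have h3 := LinearMap.congr_fun h2 ((F.map f₀).f n (x.val.2 n))
        exact h3.trans (hky n)
      obtain ⟨m', g, hg⟩ := exists_map_f_eq_zero F c hc n m _ hz
      refine ⟨m', h ≫ g, fun k hk => ?_⟩
      have hcomp : (F.map (h ≫ g)).f k ((F.map f₀).f k (x.val.2 k)) =
          (F.map g).f k ((F.map h).f k ((F.map f₀).f k (x.val.2 k))) := by
        rw [F.map_comp]; rfl
      rcases Nat.lt_succ_iff_lt_or_eq.mp hk with hk' | rfl
      · rw [hcomp, hm k hk', map_zero]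
      · rw [hcomp]; exact hg
  obtain ⟨m, h, hm⟩ := main N
  -- the image of `x` at stage `m` is zero
  have hzero : (F ⋙ box0Fun.{u}).map (f₀ ≫ h) x = 0 := by
    apply Subtype.ext
    apply Prod.ext
    · show (F.map (f₀ ≫ h)).finf x.val.1 = 0
      rw [F.map_comp]
      show (F.map h).finf ((F.map f₀).finf x.val.1) = 0
      rw [hf₀, map_zero]
    · funext k
      show (F.map (f₀ ≫ h)).f k (x.val.2 k) = 0
      rw [F.map_comp]
      show (F.map h).f k ((F.map f₀).f k (x.val.2 k)) = 0
      by_cases hkN : k < N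
      · exact hm k hkN
      · rw [hN k (by omega), map_zero]
  calc colimit.ι (F ⋙ box0Fun.{u}) j x
      = colimit.ι (F ⋙ box0Fun.{u}) m ((F ⋙ box0Fun.{u}).map (f₀ ≫ h) x) :=
        (colimit.w_apply (F ⋙ box0Fun.{u}) (f₀ ≫ h) x).symm
    _ = 0 := by rw [hzero, map_zero]
end

section
/- The category A has all small limits, where (lim_i V^i)_k = lim_i V^i_k for each k ≥ 1 and (lim_i V^i)_∞ = colim_N lim_i (⊞_N V^i)^{ℤ/2}, with structure map induced by the projections ⊞_N V^i → ∏_{k≥N} V^i_k. -/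
open scoped TensorProduct

universe u

variable {V W U : ℕ → Type u}
  [∀ k, AddCommGroup (V k)] [∀ k, Module ℚ (V k)]
  [∀ k, AddCommGroup (W k)] [∀ k, Module ℚ (W k)]
  [∀ k, AddCommGroup (U k)] [∀ k, Module ℚ (U k)]

open CategoryTheory

open CategoryTheory Limits

noncomputable section
open CategoryTheory Limits DirectSum

namespace Stmt9

variable {J : Type u} [SmallCategory J] (F : J ⥤ AObj.{u})

/-- Sections submodule: the concrete limit of the stalks at level `k`. -/
def secSub (k : ℕ) : Submodule ℚ (∀ j, (F.obj j).V k) where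
  carrier := {x | ∀ ⦃j j' : J⦄ (g : j ⟶ j'), (F.map g).f k (x j) = x j'}
  add_mem' := by
    intro x y hx hy j j' g
    show (F.map g).f k (x j + y j) = x j' + y j'
    rw [map_add, hx g, hy g]
  zero_mem' := by
    intro j j' g
    show (F.map g).f k 0 = 0
    simp
  smul_mem' := by
    intro c x hx j j' g
    show (F.map g).f k (c • x j) = c • x j'
    rw [map_smul, hx g]

abbrev SecV (k : ℕ) : Type u := ↥(secSub F k)

/-- The involution on sections. -/
def wSec (k : ℕ) : SecV F k →ₗ[ℚ] SecV F k :=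
  (LinearMap.pi fun j => ((F.obj j).w k).comp (LinearMap.proj j)).restrict (p := secSub F k)
    (q := secSub F k) (by
    intro x hx j j' g
    show (F.map g).f k ((F.obj j).w k (x j)) = (F.obj j').w k (x j')
    have h1 := LinearMap.congr_fun ((F.map g).equivar k) (x j)
    simp only [LinearMap.comp_apply] at h1
    rw [h1, hx g])

@[simp] lemma wSec_val (k : ℕ) (x : SecV F k) (j : J) :
    ((wSec F k x : SecV F k) : ∀ j, (F.obj j).V k) j = (F.obj j).w k ((x : ∀ j, (F.obj j).V k) j) :=
  rfl

lemma wSec_sq (k : ℕ) : (wSec F k).comp (wSec F k) = LinearMap.id := by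
  refine LinearMap.ext fun x => ?_
  refine Subtype.ext (funext fun j => ?_)
  have := LinearMap.congr_fun ((F.obj j).w_sq k) ((x : ∀ j, (F.obj j).V k) j)
  simpa using this

/-- The sequence of limits `lim_i (⊞_N V^i)^{ℤ/2}`. -/
def GSeq : ℕ ⥤ ModuleCat.{u} ℚ :=
  Functor.ofSequence fun N => limMap (Functor.whiskerLeft F (zeroNatTrans.{u} N))

abbrev LB (N : ℕ) : ModuleCat.{u} ℚ := (GSeq F).obj N

def tN (N : ℕ) : ↑(LB F N) →ₗ[ℚ] ↑(LB F (N + 1)) :=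
  ((GSeq F).map (homOfLE (N.le_add_right 1))).hom

def tr {N M : ℕ} (h : N ≤ M) : ↑(LB F N) →ₗ[ℚ] ↑(LB F M) :=
  ((GSeq F).map (homOfLE h)).hom

def πN (N : ℕ) (j : J) : ↑(LB F N) →ₗ[ℚ] ↥(BoxW N (F.obj j)) :=
  (limit.π (F ⋙ boxWFun.{u} N) j).hom

lemma πN_tN (M : ℕ) (j : J) (x : ↑(LB F M)) :
    ((πN F (M + 1) j (tN F M x) : BoxW (M+1) (F.obj j)) : (F.obj j).Vinf × ∀ k, (F.obj j).V k)
      = zeroAmbient (F.obj j) M (πN F M j x : (F.obj j).Vinf × ∀ k, (F.obj j).V k) := by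
  have h0 : tN F M = (limMap (Functor.whiskerLeft F (zeroNatTrans.{u} M)) : LB F M ⟶ LB F (M+1)).hom :=
    congrArg ModuleCat.Hom.hom (Functor.ofSequence_map_homOfLE_succ _ M)
  have h := LinearMap.congr_fun (congrArg ModuleCat.Hom.hom
    (limMap_π (Functor.whiskerLeft F (zeroNatTrans.{u} M)) j)) x
  rw [h0]
  exact congrArg Subtype.val h

lemma πN_natural (N : ℕ) {j j' : J} (g : j ⟶ j') (x : ↑(LB F N)) :
    ((πN F N j' x : BoxW N (F.obj j')) : (F.obj j').Vinf × ∀ k, (F.obj j').V k)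
      = boxAmbient (F.map g) (πN F N j x : (F.obj j).Vinf × ∀ k, (F.obj j).V k) := by
  have h := LinearMap.congr_fun (congrArg ModuleCat.Hom.hom (limit.w (F ⋙ boxWFun.{u} N) g)) x
  exact (congrArg Subtype.val h).symm

end Stmt9
end

noncomputable section
open CategoryTheory Limits DirectSum

namespace Stmt9
variable {J : Type u} [SmallCategory J] (F : J ⥤ AObj.{u})

/-- Projection from the `N`-th limit to the sections at level `k`. -/
noncomputable def qAt (N k : ℕ) : ↑(LB F N) →ₗ[ℚ] SecV F k :=
  LinearMap.codRestrict (secSub F k)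
    (LinearMap.pi fun j => (LinearMap.proj k).comp
      ((LinearMap.snd ℚ (F.obj j).Vinf (∀ k, (F.obj j).V k)).comp
        (((BoxW N (F.obj j)).subtype).comp (πN F N j))))
    (by
      intro x j j' g
      show (F.map g).f k ((πN F N j x).val.2 k) = (πN F N j' x).val.2 k
      rw [πN_natural F N g x]
      rfl)

lemma qAt_val (N k : ℕ) (x : ↑(LB F N)) (j : J) :
    ((qAt F N k x : SecV F k) : ∀ j, (F.obj j).V k) j = (πN F N j x).val.2 k := rfl

/-- The structure map on the `N`-th stage. -/
noncomputable def sigma0 (N : ℕ) : ↑(LB F N) →ₗ[ℚ] VEnd (SecV F) :=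
  VEnd.mk.comp (LinearMap.pi fun k => qAt F N k)

lemma sigma0_tN (N : ℕ) (x : ↑(LB F N)) : sigma0 F (N + 1) (tN F N x) = sigma0 F N x := by
  show (evZero (SecV F)).mkQ _ = (evZero (SecV F)).mkQ _
  rw [Submodule.mkQ_apply, Submodule.mkQ_apply, Submodule.Quotient.eq]
  refine ⟨N + 1, fun k hk => ?_⟩
  refine Subtype.ext (funext fun j => ?_)
  have h1 : (qAt F (N+1) k (tN F N x)).val j = (πN F (N+1) j (tN F N x)).val.2 k := rfl
  have h2 : (qAt F N k x).val j = (πN F N j x).val.2 k := rfl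
  show (qAt F (N+1) k (tN F N x)).val j - (qAt F N k x).val j = 0
  rw [h1, h2, πN_tN]
  show (if k = N then (0 : (∀ i, (F.obj j).V i) →ₗ[ℚ] (F.obj j).V k) else LinearMap.proj k)
      ((πN F N j x).val.2) - (πN F N j x).val.2 k = 0
  rw [if_neg (by omega : ¬ k = N)]
  show (πN F N j x).val.2 k - (πN F N j x).val.2 k = 0
  exact sub_self _

/-- The direct sum realising the concrete sequential colimit. -/
abbrev DS := DirectSum ℕ (fun N => ↑(LB F N))

noncomputable def lofN (N : ℕ) : ↑(LB F N) →ₗ[ℚ] DS F := DirectSum.lof ℚ ℕ (fun N => ↑(LB F N)) N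

/-- Relations for the sequential colimit. -/
def relSub : Submodule ℚ (DS F) :=
  Submodule.span ℚ {d | ∃ N x, d = lofN F (N + 1) (tN F N x) - lofN F N x}

/-- The stalk at infinity of the limit: the concrete sequential colimit of the
`lim_i (⊞_N V^i)^{ℤ/2}`. -/
def VInf : Type u := DS F ⧸ relSub F

noncomputable instance : AddCommGroup (VInf F) := by unfold VInf; infer_instance
noncomputable instance : Module ℚ (VInf F) := by unfold VInf; infer_instance

noncomputable def ιQ (N : ℕ) : ↑(LB F N) →ₗ[ℚ] VInf F := (relSub F).mkQ.comp (lofN F N)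

lemma ιQ_tN (N : ℕ) (x : ↑(LB F N)) : ιQ F (N + 1) (tN F N x) = ιQ F N x := by
  show (relSub F).mkQ _ = (relSub F).mkQ _
  rw [Submodule.mkQ_apply, Submodule.mkQ_apply, Submodule.Quotient.eq]
  exact Submodule.subset_span ⟨N, x, rfl⟩

lemma tr_succ {N M : ℕ} (h : N ≤ M) (x : ↑(LB F N)) :
    tr F (h.trans (M.le_add_right 1)) x = tN F M (tr F h x) := by
  show ((GSeq F).map (homOfLE _)).hom x = _
  rw [← homOfLE_comp h (M.le_add_right 1), CategoryTheory.Functor.map_comp]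
  rfl

lemma tr_refl (N : ℕ) (x : ↑(LB F N)) : tr F (le_refl N) x = x := by
  show ((GSeq F).map (homOfLE _)).hom x = x
  rw [Subsingleton.elim (homOfLE (le_refl N)) (𝟙 N), CategoryTheory.Functor.map_id]
  rfl

lemma ιQ_tr {N M : ℕ} (h : N ≤ M) (x : ↑(LB F N)) : ιQ F M (tr F h x) = ιQ F N x := by
  induction M, h using Nat.le_induction with
  | base => rw [tr_refl]
  | succ M h ih =>
    have e : tr F (h.trans (M.le_add_right 1)) x = tN F M (tr F h x) := tr_succ F h x
    rw [e, ιQ_tN F M, ih]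

lemma ιQ_surj (v : VInf F) : ∃ N x, ιQ F N x = v := by
  obtain ⟨d, rfl⟩ := (relSub F).mkQ_surjective v
  induction d using DirectSum.induction_on with
  | zero => exact ⟨0, 0, by simp; rfl⟩
  | of N x => exact ⟨N, x, rfl⟩
  | add a b ha hb =>
    obtain ⟨N₁, x₁, h₁⟩ := ha
    obtain ⟨N₂, x₂, h₂⟩ := hb
    refine ⟨max N₁ N₂, tr F (le_max_left _ _) x₁ + tr F (le_max_right _ _) x₂, ?_⟩
    rw [map_add, ιQ_tr, ιQ_tr, h₁, h₂]
    exact (map_add _ a b).symm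

/-- Universal property of the concrete sequential colimit. -/
noncomputable def descQ {T : Type u} [AddCommGroup T] [Module ℚ T]
    (g : ∀ N, ↑(LB F N) →ₗ[ℚ] T) (hg : ∀ N x, g (N + 1) (tN F N x) = g N x) :
    VInf F →ₗ[ℚ] T :=
  (relSub F).liftQ (DirectSum.toModule ℚ ℕ T g) (by
    refine Submodule.span_le.2 ?_
    rintro _ ⟨N, x, rfl⟩
    simp only [SetLike.mem_coe, LinearMap.mem_ker, map_sub]
    rw [show (DirectSum.toModule ℚ ℕ T g) (lofN F (N+1) (tN F N x)) = g (N+1) (tN F N x) from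
        DirectSum.toModule_lof ℚ _ _,
      show (DirectSum.toModule ℚ ℕ T g) (lofN F N x) = g N x from DirectSum.toModule_lof ℚ _ _,
      hg N x, sub_self])

@[simp] lemma descQ_ι {T : Type u} [AddCommGroup T] [Module ℚ T]
    (g : ∀ N, ↑(LB F N) →ₗ[ℚ] T) (hg : ∀ N x, g (N + 1) (tN F N x) = g N x)
    (N : ℕ) (x : ↑(LB F N)) : descQ F g hg (ιQ F N x) = g N x := by
  show (relSub F).liftQ _ _ ((relSub F).mkQ (lofN F N x)) = _
  rw [Submodule.mkQ_apply]
  exact DirectSum.toModule_lof ℚ _ _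

lemma hom_extQ {T : Type u} [AddCommGroup T] [Module ℚ T]
    {a b : VInf F →ₗ[ℚ] T} (h : ∀ N x, a (ιQ F N x) = b (ιQ F N x)) : a = b := by
  refine LinearMap.ext fun v => ?_
  obtain ⟨N, x, rfl⟩ := ιQ_surj F v
  exact h N x

/-- The structure map at infinity. -/
noncomputable def sigL : VInf F →ₗ[ℚ] VEnd (SecV F) := descQ F (sigma0 F) (sigma0_tN F)

end Stmt9
end

noncomputable section
open CategoryTheory Limits DirectSum

namespace Stmt9
variable {J : Type u} [SmallCategory J] (F : J ⥤ AObj.{u})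

lemma sigL_ι (N : ℕ) (x : ↑(LB F N)) :
    sigL F (ιQ F N x) = VEnd.mk ((LinearMap.pi fun k => qAt F N k) x) :=
  descQ_ι F _ _ N x

/-- The limit object in `𝒜(𝒟)`. -/
noncomputable def limAO : AObj.{u} where
  Vinf := VInf F
  V := SecV F
  w := wSec F
  w_sq := wSec_sq F
  sig := sigL F
  sig_w := by
    refine hom_extQ F fun N x => ?_
    show endMap (wSec F) (sigL F (ιQ F N x)) = sigL F (ιQ F N x)
    rw [sigL_ι, endMap_mk]
    refine congrArg _ (funext fun k => ?_)
    refine Subtype.ext (funext fun j => ?_)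
    show (F.obj j).w k ((πN F N j x).val.2 k) = (πN F N j x).val.2 k
    exact (Submodule.mem_inf.1 (πN F N j x).prop).2 k

noncomputable def fst0 (N : ℕ) (j : J) : ↑(LB F N) →ₗ[ℚ] (F.obj j).Vinf :=
  (LinearMap.fst ℚ (F.obj j).Vinf (∀ k, (F.obj j).V k)).comp
    (((BoxW N (F.obj j)).subtype).comp (πN F N j))

lemma fst0_tN (N : ℕ) (j : J) (x : ↑(LB F N)) : fst0 F (N + 1) j (tN F N x) = fst0 F N j x := by
  show (πN F (N + 1) j (tN F N x)).val.1 = (πN F N j x).val.1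
  rw [πN_tN]
  rfl

/-- Projection of the stalk at infinity of the limit to that of `F.obj j`. -/
noncomputable def finfL (j : J) : VInf F →ₗ[ℚ] (F.obj j).Vinf :=
  descQ F (fun N => fst0 F N j) (fun N x => fst0_tN F N j x)

lemma finfL_ι (N : ℕ) (j : J) (x : ↑(LB F N)) :
    finfL F j (ιQ F N x) = (πN F N j x).val.1 :=
  descQ_ι F _ _ N x

/-- The legs of the limit cone. -/
noncomputable def legAO (j : J) : AHom (limAO F) (F.obj j) where
  finf := finfL F j
  f k := (LinearMap.proj j).comp (secSub F k).subtype
  equivar k := rfl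
  comm := by
    refine hom_extQ F fun N x => ?_
    show endMap _ (sigL F (ιQ F N x)) = (F.obj j).sig (finfL F j (ιQ F N x))
    rw [sigL_ι, finfL_ι, endMap_mk]
    exact ((Submodule.mem_inf.1 (πN F N j x).prop).1).1.symm

/-- The limit cone. -/
noncomputable def limCone : Cone F where
  pt := limAO F
  π :=
    { app := legAO F
      naturality := by
        intro j j' g
        show 𝟙 (limAO F) ≫ legAO F j' = legAO F j ≫ F.map g
        rw [Category.id_comp]
        refine AHom.ext ?_ ?_
        · refine hom_extQ F fun N x => ?_
          show finfL F j' (ιQ F N x) = (F.map g).finf (finfL F j (ιQ F N x))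
          rw [finfL_ι, finfL_ι]
          exact congrArg Prod.fst (πN_natural F N g x)
        · funext k
          refine LinearMap.ext fun x => ?_
          exact (x.prop g).symm }

end Stmt9
end

noncomputable section
open CategoryTheory Limits DirectSum

namespace Stmt9
variable {J : Type u} [SmallCategory J] (F : J ⥤ AObj.{u})

lemma tr_spec {N M : ℕ} (h : N ≤ M) (j : J) (x : ↑(LB F N)) :
    (πN F M j (tr F h x)).val.1 = (πN F N j x).val.1 ∧
    ∀ k, M ≤ k → (πN F M j (tr F h x)).val.2 k = (πN F N j x).val.2 k := by
  induction M, h using Nat.le_induction with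
  | base =>
    rw [tr_refl]
    exact ⟨rfl, fun _ _ => rfl⟩
  | succ M h ih =>
    have e : tr F (h.trans (M.le_add_right 1)) x = tN F M (tr F h x) := tr_succ F h x
    rw [e]
    have hz := πN_tN F M j (tr F h x)
    constructor
    · rw [hz]
      show (πN F M j (tr F h x)).val.1 = (πN F N j x).val.1
      exact ih.1
    · intro k hk
      rw [hz]
      show (if k = M then (0 : (∀ i, (F.obj j).V i) →ₗ[ℚ] (F.obj j).V k) else LinearMap.proj k)
        ((πN F M j (tr F h x)).val.2) = (πN F N j x).val.2 k
      rw [if_neg (by omega : ¬ k = M)]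
      exact ih.2 k (by omega)

lemma colim_extQ (v : VInf F) (h1 : sigL F v = 0) (h2 : ∀ j, finfL F j v = 0) : v = 0 := by
  obtain ⟨N, x, rfl⟩ := ιQ_surj F v
  rw [sigL_ι] at h1
  have hev : (LinearMap.pi fun k => qAt F N k) x ∈ evZero (SecV F) :=
    (Submodule.Quotient.mk_eq_zero _).1 h1
  obtain ⟨M, hM⟩ := hev
  have hy : tr F (le_max_left N M) x = 0 := by
    refine Concrete.limit_ext (F ⋙ boxWFun.{u} (max N M)) _ 0 fun j => ?_
    show πN F (max N M) j (tr F (le_max_left N M) x) = πN F (max N M) j 0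
    rw [map_zero]
    refine Subtype.ext (Prod.ext ?_ ?_)
    · rw [(tr_spec F (le_max_left N M) j x).1, ← finfL_ι, h2 j]
      rfl
    · funext k
      by_cases hk : k < max N M
      · rw [(Submodule.mem_inf.1 (πN F (max N M) j _).prop).1.2 k hk]
        rfl
      · rw [(tr_spec F (le_max_left N M) j x).2 k (by omega)]
        have h4 : ((LinearMap.pi fun k => qAt F N k) x) k = 0 :=
          hM k (le_trans (le_max_right N M) (by omega))
        have h5 : (πN F N j x).val.2 k = (((LinearMap.pi fun k => qAt F N k) x) k).val j := rfl
        rw [h5, h4]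
        rfl
  have := congrArg (ιQ F (max N M)) hy
  rw [ιQ_tr, map_zero] at this
  exact this

end Stmt9
end

noncomputable section
open CategoryTheory Limits DirectSum

namespace Stmt9
variable {J : Type u} [SmallCategory J] {F : J ⥤ AObj.{u}}

/-- A linear splitting of the quotient map onto `VEnd`. -/
noncomputable def ρS (S : AObj.{u}) : VEnd S.V →ₗ[ℚ] ∀ k, S.V k :=
  (Module.projective_lifting_property (evZero S.V).mkQ LinearMap.id
    (evZero S.V).mkQ_surjective).choose

lemma ρS_mk (S : AObj.{u}) (z : VEnd S.V) : VEnd.mk (ρS S z) = z :=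
  LinearMap.congr_fun
    (Module.projective_lifting_property (evZero S.V).mkQ LinearMap.id
      (evZero S.V).mkQ_surjective).choose_spec z

variable (s : Cone F)

noncomputable def yS : s.pt.Vinf →ₗ[ℚ] ∀ k, s.pt.V k := (ρS s.pt).comp s.pt.sig

lemma cone_w_f {j j' : J} (g : j ⟶ j') (k : ℕ) (t : s.pt.V k) :
    (F.map g).f k ((s.π.app j).f k t) = (s.π.app j').f k t :=
  LinearMap.congr_fun (congrFun (congrArg AHom.f (s.w g)) k) t

lemma cone_w_finf {j j' : J} (g : j ⟶ j') (t : s.pt.Vinf) :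
    (F.map g).finf ((s.π.app j).finf t) = (s.π.app j').finf t :=
  LinearMap.congr_fun (congrArg AHom.finf (s.w g)) t

/-- The averaged (fixed-point valued) candidate sequence. -/
noncomputable def halfFix (j : J) : s.pt.Vinf →ₗ[ℚ] ∀ k, (F.obj j).V k :=
  LinearMap.pi fun k =>
    (1/2 : ℚ) • (((s.π.app j).f k).comp ((LinearMap.proj k).comp (yS s))
      + ((F.obj j).w k).comp (((s.π.app j).f k).comp ((LinearMap.proj k).comp (yS s))))

lemma halfFix_apply (j : J) (v : s.pt.Vinf) (k : ℕ) :
    halfFix s j v k = (1/2 : ℚ) • ((s.π.app j).f k (yS s v k)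
      + (F.obj j).w k ((s.π.app j).f k (yS s v k))) := rfl

lemma w_invol (A : AObj.{u}) (k : ℕ) (t : A.V k) : A.w k (A.w k t) = t :=
  LinearMap.congr_fun (A.w_sq k) t

lemma sig_finf (j : J) (v : s.pt.Vinf) :
    (F.obj j).sig ((s.π.app j).finf v)
      = VEnd.mk (fun k => (s.π.app j).f k (yS s v k)) := by
  have h1 : (F.obj j).sig ((s.π.app j).finf v)
      = endMap (fun k => (s.π.app j).f k) (s.pt.sig v) :=
    (LinearMap.congr_fun (s.π.app j).comm v).symm
  have h2 : s.pt.sig v = VEnd.mk (yS s v) := (ρS_mk _ _).symm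
  rw [h1, h2]
  exact endMap_mk _ _

lemma mk_halfFix (j : J) (v : s.pt.Vinf) :
    VEnd.mk (halfFix s j v) = VEnd.mk (fun k => (s.π.app j).f k (yS s v k)) := by
  have hab : halfFix s j v = (1/2 : ℚ) • ((fun k => (s.π.app j).f k (yS s v k))
      + fun k => (F.obj j).w k ((s.π.app j).f k (yS s v k))) := rfl
  rw [hab, map_smul, map_add]
  have hb : VEnd.mk (fun k => (F.obj j).w k ((s.π.app j).f k (yS s v k)))
      = endMap ((F.obj j).w) (VEnd.mk (fun k => (s.π.app j).f k (yS s v k))) :=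
    (endMap_mk _ _).symm
  rw [hb, ← sig_finf s j v]
  have hw : endMap (F.obj j).w ((F.obj j).sig ((s.π.app j).finf v))
      = (F.obj j).sig ((s.π.app j).finf v) :=
    LinearMap.congr_fun (F.obj j).sig_w ((s.π.app j).finf v)
  rw [hw, sig_finf s j v]
  rw [← two_smul ℚ (VEnd.mk fun k => (s.π.app j).f k (yS s v k)), smul_smul]
  norm_num

/-- The lift into `(⊞_0 F.obj j)^{ℤ/2}`. -/
noncomputable def legS (j : J) : s.pt.Vinf →ₗ[ℚ] ↥(BoxW 0 (F.obj j)) :=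
  LinearMap.codRestrict (BoxW 0 (F.obj j)) (((s.π.app j).finf).prod (halfFix s j)) (by
    intro v
    refine Submodule.mem_inf.2 ⟨⟨?_, fun k hk => absurd hk (Nat.not_lt_zero k)⟩, fun k => ?_⟩
    · show (F.obj j).sig ((s.π.app j).finf v) = VEnd.mk (halfFix s j v)
      rw [mk_halfFix, sig_finf]
    · show (F.obj j).w k (halfFix s j v k) = halfFix s j v k
      rw [halfFix_apply, map_smul, map_add, w_invol]
      exact congrArg (fun t => (1/2 : ℚ) • t) (add_comm _ _))

lemma legS_val (j : J) (v : s.pt.Vinf) :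
    (legS s j v).val = ((s.π.app j).finf v, halfFix s j v) := rfl

/-- The cone over `F ⋙ boxWFun 0` induced by a cone over `F`. -/
noncomputable def coneS : Cone (F ⋙ boxWFun.{u} 0) where
  pt := ModuleCat.of ℚ s.pt.Vinf
  π :=
    { app := fun j => ModuleCat.ofHom (legS s j)
      naturality := by
        intro j j' g
        simp only [Functor.const_obj_map, Category.id_comp]
        refine ModuleCat.hom_ext (LinearMap.ext fun v => ?_)
        refine Subtype.ext (Prod.ext ?_ ?_)
        · exact (cone_w_finf s g v).symm
        · funext k
          show halfFix s j' v k = (F.map g).f k (halfFix s j v k)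
          rw [halfFix_apply, halfFix_apply, map_smul, map_add]
          have he : (F.map g).f k ((F.obj j).w k ((s.π.app j).f k (yS s v k)))
              = (F.obj j').w k ((F.map g).f k ((s.π.app j).f k (yS s v k))) :=
            LinearMap.congr_fun ((F.map g).equivar k) _
          rw [he, cone_w_f s g k] }

noncomputable def mS : s.pt.Vinf →ₗ[ℚ] ↑(LB F 0) :=
  (limit.lift (F ⋙ boxWFun.{u} 0) (coneS s)).hom

lemma πN_mS (j : J) (v : s.pt.Vinf) : πN F 0 j (mS s v) = legS s j v :=
  LinearMap.congr_fun (congrArg ModuleCat.Hom.hom (limit.lift_π (coneS s) j)) v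

noncomputable def liftF (k : ℕ) : s.pt.V k →ₗ[ℚ] SecV F k :=
  LinearMap.codRestrict (secSub F k) (LinearMap.pi fun j => (s.π.app j).f k)
    (fun t j j' g => cone_w_f s g k t)

/-- The lift morphism to the limit object. -/
noncomputable def liftAO : AHom s.pt (limAO F) where
  finf := (ιQ F 0).comp (mS s)
  f := liftF s
  equivar k := by
    refine LinearMap.ext fun t => ?_
    refine Subtype.ext (funext fun j => ?_)
    show (s.π.app j).f k (s.pt.w k t) = (F.obj j).w k ((s.π.app j).f k t)
    exact LinearMap.congr_fun ((s.π.app j).equivar k) t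
  comm := by
    refine LinearMap.ext fun v => ?_
    show endMap (liftF s) (s.pt.sig v) = sigL F (ιQ F 0 (mS s v))
    rw [sigL_ι]
    have h2 : s.pt.sig v = VEnd.mk (yS s v) := (ρS_mk _ _).symm
    rw [h2, endMap_mk]
    -- both sides are classes; difference is eventually zero
    have hw : VEnd.mk (fun k => s.pt.w k (yS s v k)) = VEnd.mk (yS s v) := by
      have : VEnd.mk (fun k => s.pt.w k (yS s v k)) = endMap s.pt.w (VEnd.mk (yS s v)) :=
        (endMap_mk _ _).symm
      rw [this, ← h2]
      exact LinearMap.congr_fun s.pt.sig_w v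
    have hev : (fun k => s.pt.w k (yS s v k)) - yS s v ∈ evZero s.pt.V := by
      rw [← Submodule.Quotient.eq]
      exact hw
    obtain ⟨M, hM⟩ := hev
    show Submodule.Quotient.mk _ = Submodule.Quotient.mk _
    rw [Submodule.Quotient.eq]
    refine ⟨M, fun k hk => ?_⟩
    have hfix : s.pt.w k (yS s v k) = yS s v k := by
      have := hM k hk
      rw [Pi.sub_apply] at this
      exact sub_eq_zero.1 this
    refine Subtype.ext (funext fun j => ?_)
    show (s.π.app j).f k (yS s v k) - (πN F 0 j (mS s v)).val.2 k = 0
    rw [πN_mS]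
    show (s.π.app j).f k (yS s v k) - halfFix s j v k = 0
    rw [halfFix_apply]
    have he : (F.obj j).w k ((s.π.app j).f k (yS s v k))
        = (s.π.app j).f k (s.pt.w k (yS s v k)) :=
      (LinearMap.congr_fun ((s.π.app j).equivar k) _).symm
    rw [he, hfix, ← two_smul ℚ ((s.π.app j).f k (yS s v k)), smul_smul]
    norm_num

end Stmt9
end

noncomputable section
open CategoryTheory Limits DirectSum

namespace Stmt9
variable {J : Type u} [SmallCategory J] {F : J ⥤ AObj.{u}}

lemma liftAO_fac (s : Cone F) (j : J) : (liftAO s : AHom s.pt (limAO F)) ≫ legAO F j = s.π.app j := by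
  refine AHom.ext ?_ ?_
  · refine LinearMap.ext fun v => ?_
    show finfL F j (ιQ F 0 (mS s v)) = (s.π.app j).finf v
    rw [finfL_ι, πN_mS]
    rfl
  · funext k
    rfl

/-- The limit cone is a limit cone. -/
noncomputable def limIsLimit (F : J ⥤ AObj.{u}) : IsLimit (limCone F) where
  lift s := liftAO s
  fac s j := liftAO_fac s j
  uniq s m hm := by
    have hf : m.f = (liftAO s).f := by
      funext k
      refine LinearMap.ext fun t => ?_
      refine Subtype.ext (funext fun j => ?_)
      exact LinearMap.congr_fun (congrFun (congrArg AHom.f (hm j)) k) t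
    refine AHom.ext ?_ hf
    refine LinearMap.ext fun v => ?_
    have hfin : ∀ j, finfL F j (m.finf v) = finfL F j ((liftAO s).finf v) := by
      intro j
      have h1 := LinearMap.congr_fun (congrArg AHom.finf (hm j)) v
      have h2 := LinearMap.congr_fun (congrArg AHom.finf (liftAO_fac s j)) v
      exact h1.trans h2.symm
    have hsig : sigL F (m.finf v) = sigL F ((liftAO s).finf v) := by
      have h1 : sigL F (m.finf v) = endMap m.f (s.pt.sig v) :=
        (LinearMap.congr_fun m.comm v).symm
      have h2 : sigL F ((liftAO s).finf v) = endMap (liftAO s).f (s.pt.sig v) :=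
        (LinearMap.congr_fun (liftAO s).comm v).symm
      rw [h1, h2, hf]
      rfl
    have hd : (show VInf F from m.finf v) - (show VInf F from (liftAO s).finf v) = 0 := by
      refine colim_extQ F _ ?_ ?_
      · rw [map_sub, hsig, sub_self]
      · intro j
        rw [map_sub, hfin j, sub_self]
    exact sub_eq_zero.1 hd

/-- The stalk functors send the limit cone to limit cones. -/
noncomputable def pkIsLimit (F : J ⥤ AObj.{u}) (k : ℕ) :
    IsLimit ((pkFun.{u} k).mapCone (limCone F)) where
  lift t := ModuleCat.ofHom
    (LinearMap.codRestrict (secSub F k) (LinearMap.pi fun j => (t.π.app j).hom)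
      (fun x j j' g => LinearMap.congr_fun (congrArg ModuleCat.Hom.hom (t.w g)) x))
  fac t j := by
    refine ModuleCat.hom_ext (LinearMap.ext fun x => ?_)
    rfl
  uniq t m hm := by
    refine ModuleCat.hom_ext (LinearMap.ext fun x => ?_)
    refine Subtype.ext (funext fun j => ?_)
    exact LinearMap.congr_fun (congrArg ModuleCat.Hom.hom (hm j)) x

end Stmt9
end

noncomputable section
open CategoryTheory Limits DirectSum

namespace Stmt9
variable {J : Type u} [SmallCategory J]

/-- The cocone exhibiting `VInf` as the sequential colimit. -/
noncomputable def infCocone (F : J ⥤ AObj.{u}) : Cocone (GSeq F) where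
  pt := ModuleCat.of ℚ (VInf F)
  ι := NatTrans.ofSequence (fun N => ModuleCat.ofHom (ιQ F N)) (by
    intro N
    refine ModuleCat.hom_ext (LinearMap.ext fun x => ?_)
    exact ιQ_tN F N x)

noncomputable def infIsColimit (F : J ⥤ AObj.{u}) : IsColimit (infCocone F) where
  desc t := ModuleCat.ofHom (descQ F (fun N => (t.ι.app N).hom)
    (fun N x => LinearMap.congr_fun (congrArg ModuleCat.Hom.hom (t.w (homOfLE (N.le_add_right 1)))) x))
  fac t N := by
    refine ModuleCat.hom_ext (LinearMap.ext fun x => ?_)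
    have h2 : descQ F (fun N => (t.ι.app N).hom)
        (fun N x => LinearMap.congr_fun (congrArg ModuleCat.Hom.hom (t.w (homOfLE (N.le_add_right 1)))) x) (ιQ F N x)
        = t.ι.app N x := descQ_ι F _ _ N x
    exact h2
  uniq t m hm := by
    refine ModuleCat.hom_ext (hom_extQ F fun N x => ?_)
    have h1 := LinearMap.congr_fun (congrArg ModuleCat.Hom.hom (hm N)) x
    have h2 : descQ F (fun N => (t.ι.app N).hom)
        (fun N x => LinearMap.congr_fun (congrArg ModuleCat.Hom.hom (t.w (homOfLE (N.le_add_right 1)))) x) (ιQ F N x)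
        = t.ι.app N x := descQ_ι F _ _ N x
    exact h1.trans h2.symm

/-- The stalk at infinity of the limit is the claimed sequential colimit. -/
noncomputable def infIso (F : J ⥤ AObj.{u}) :
    (pinfFun.{u}).obj (limCone F).pt ≅
      colimit (Functor.ofSequence fun N => limMap (Functor.whiskerLeft F (zeroNatTrans.{u} N))) :=
  (infIsColimit F).coconePointUniqueUpToIso (colimit.isColimit (GSeq F))

end Stmt9
end
/-- the category `𝒜(𝒟)` has all small limits; they are computed by
`(lim_i V^i)_k = lim_i V^i_k` on the finite stalks (i.e. each stalk functor `p_k` sends a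
limit cone to a limit cone), while the stalk at `∞` is
`(lim_i V^i)_∞ = colim_N lim_i (⊞_N V^i)^{ℤ/2}`, the colimit over `N` (along the maps
induced by the natural transformations `(⊞_N)^{ℤ/2} ⟶ (⊞_{N+1})^{ℤ/2}`) of the limits of
the `ℤ/2`-fixed points of `⊞_N`. -/
theorem statement9 :
    HasLimits AObj.{u} ∧
    ∀ (J : Type u) [inst : SmallCategory J] (F : J ⥤ AObj.{u}),
      ∃ c : Cone F, Nonempty (IsLimit c) ∧
        (∀ k, Nonempty (IsLimit ((pkFun.{u} k).mapCone c))) ∧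
        Nonempty ((pinfFun.{u}).obj c.pt ≅
          colimit (Functor.ofSequence fun N =>
            limMap (Functor.whiskerLeft F (zeroNatTrans.{u} N)))) := by
  constructor
  · exact { has_limits_of_shape := fun J _ =>
      { has_limit := fun F => HasLimit.mk ⟨Stmt9.limCone F, Stmt9.limIsLimit F⟩ } }
  · intro J _ F
    exact ⟨Stmt9.limCone F, ⟨Stmt9.limIsLimit F⟩, fun k => ⟨Stmt9.pkIsLimit F k⟩,
      ⟨Stmt9.infIso F⟩⟩
end

section
/- For M a ℚ-vector space, define cM ∈ A by (cM)_k = M for all k, (cM)_∞ = M, with structure map induced by the diagonal M → ∏_{k≥1} M. Then c is left adjoint to the functor V ↦ (⊞_1 V)^{ℤ/2}: there is a natural bijection A(cM, V) ≅ Hom_ℚ(M, (⊞_1 V)^{ℤ/2}). -/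
open scoped TensorProduct

universe u

variable {V W U : ℕ → Type u}
  [∀ k, AddCommGroup (V k)] [∀ k, Module ℚ (V k)]
  [∀ k, AddCommGroup (W k)] [∀ k, Module ℚ (W k)]
  [∀ k, AddCommGroup (U k)] [∀ k, Module ℚ (U k)]

open CategoryTheory

instance (A B : AObj.{u}) : Add (A ⟶ B) := inferInstanceAs (Add (AHom A B))
instance (A B : AObj.{u}) : Zero (A ⟶ B) := inferInstanceAs (Zero (AHom A B))
instance (A B : AObj.{u}) : SMul ℚ (A ⟶ B) := inferInstanceAs (SMul ℚ (AHom A B))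

open CategoryTheory Limits

/-- The morphism `cM → cN` induced by a linear map `M → N`. -/
def cMap {M N : Type u} [AddCommGroup M] [Module ℚ M] [AddCommGroup N] [Module ℚ N]
    (f : M →ₗ[ℚ] N) : cObj M ⟶ cObj N :=
  ⟨f, fun _ => f, fun _ => rfl, LinearMap.ext fun _ => rfl⟩

section Stmt10

variable {M : Type u} [AddCommGroup M] [Module ℚ M] {A : AObj.{u}}

lemma toBox_mem (φ : cObj M ⟶ A) (m : M) :
    (φ.finf m, fun k => φ.f k m) ∈ BoxW 0 A := by
  refine ⟨⟨?_, fun k hk => by omega⟩, fun k => ?_⟩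
  · have := congrArg (fun g => g m) φ.comm
    exact this.symm
  · have := congrArg (fun g => g m) (φ.equivar k)
    exact this.symm

/-- Forward direction of the adjunction. -/
def toBox (φ : cObj M ⟶ A) : M →ₗ[ℚ] BoxW 0 A where
  toFun m := ⟨(φ.finf m, fun k => φ.f k m), toBox_mem φ m⟩
  map_add' x y := Subtype.ext (Prod.ext (by exact map_add φ.finf x y) (funext fun k => by exact map_add (φ.f k) x y))
  map_smul' c x := Subtype.ext (Prod.ext (by exact map_smul φ.finf c x) (funext fun k => by exact map_smul (φ.f k) c x))

/-- Backward direction of the adjunction. -/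
def ofBox (f : M →ₗ[ℚ] BoxW 0 A) : cObj M ⟶ A where
  finf := (LinearMap.fst ℚ _ _).comp (((BoxW 0 A).subtype).comp f)
  f k := (LinearMap.proj k).comp ((LinearMap.snd ℚ _ _).comp (((BoxW 0 A).subtype).comp f))
  equivar k := by
    refine LinearMap.ext fun m => ?_
    exact ((f m).2.2 k).symm
  comm := by
    refine LinearMap.ext fun m => ?_
    have h := (f m).2.1.1
    show endMap _ (VEnd.mk fun _ => m) = A.sig ((f m).1.1)
    exact h.symm

end Stmt10

theorem statement10' :
    ∃ e : ∀ (M : ModuleCat.{u} ℚ) (A : AObj.{u}), (cObj M ⟶ A) ≃ (M →ₗ[ℚ] ↥(BoxW 0 A)),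
      (∀ (M : ModuleCat.{u} ℚ) (A B : AObj.{u}) (g : A ⟶ B) (φ : cObj M ⟶ A),
        e M B (φ ≫ g) = (boxWMap g 0).comp (e M A φ)) ∧
      (∀ (M N : ModuleCat.{u} ℚ) (h : N ⟶ M) (A : AObj.{u}) (φ : cObj M ⟶ A),
        e N A (cMap h.hom ≫ φ) = (e M A φ).comp h.hom) := by
  refine ⟨fun M A => ⟨toBox, ofBox, ?_, ?_⟩, ?_, ?_⟩
  · intro φ
    apply AHom.ext
    · rfl
    · rfl
  · intro f
    refine LinearMap.ext fun m => ?_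
    apply Subtype.ext
    apply Prod.ext
    · rfl
    · rfl
  · intro M A B g φ
    refine LinearMap.ext fun m => Subtype.ext ?_
    rfl
  · intro M N h A φ
    refine LinearMap.ext fun m => Subtype.ext ?_
    rfl

/-- the constant-object functor `c` is left adjoint to the global sections
functor `V ↦ (⊞_1 V)^{ℤ/2}`: there is a bijection
`𝒜(𝒟)(cM, V) ≅ Hom_ℚ(M, (⊞_1 V)^{ℤ/2})`, natural in both variables. -/
theorem statement10 :
    ∃ e : ∀ (M : ModuleCat.{u} ℚ) (A : AObj.{u}), (cObj M ⟶ A) ≃ (M →ₗ[ℚ] ↥(BoxW 0 A)),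
      (∀ (M : ModuleCat.{u} ℚ) (A B : AObj.{u}) (g : A ⟶ B) (φ : cObj M ⟶ A),
        e M B (φ ≫ g) = (boxWMap g 0).comp (e M A φ)) ∧
      (∀ (M N : ModuleCat.{u} ℚ) (h : N ⟶ M) (A : AObj.{u}) (φ : cObj M ⟶ A),
        e N A (cMap h.hom ≫ φ) = (e M A φ).comp h.hom) := by
  exact statement10'
end

section
/- In the category A, Hom_A(cℚ, cℚ) is isomorphic as a ℚ-algebra to the ring of continuous functions from {∞} ∪ ℕ_{≥1} (one-point compactification of discrete ℕ_{≥1}) to discrete ℚ, i.e., to the ring of sequences (q_∞, q_1, q_2, ...) of rationals with q_k = q_∞ for all but finitely many k. -/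
open scoped TensorProduct

universe u

variable {V W U : ℕ → Type u}
  [∀ k, AddCommGroup (V k)] [∀ k, Module ℚ (V k)]
  [∀ k, AddCommGroup (W k)] [∀ k, Module ℚ (W k)]
  [∀ k, AddCommGroup (U k)] [∀ k, Module ℚ (U k)]

open CategoryTheory

open CategoryTheory Limits

/-- The `ℚ`-algebra of "eventually constant" sequences `(q_∞, q_1, q_2, ...)` of
rationals with `q_k = q_∞` for all but finitely many `k`; equivalently, the ring of
continuous functions from the one-point compactification of the discrete natural numbers
to discrete `ℚ`. -/
def S13 : Subalgebra ℚ (ℚ × (ℕ → ℚ)) where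
  carrier := {p | {n | p.2 n ≠ p.1}.Finite}
  add_mem' := by
    intro a b ha hb
    refine ((ha.union hb).subset ?_ : _)
    intro n hn
    simp only [Set.mem_setOf_eq, Set.mem_union] at hn ⊢
    by_contra hc
    push_neg at hc
    exact hn (by simp [hc.1, hc.2])
  mul_mem' := by
    intro a b ha hb
    refine ((ha.union hb).subset ?_ : _)
    intro n hn
    simp only [Set.mem_setOf_eq, Set.mem_union] at hn ⊢
    by_contra hc
    push_neg at hc
    exact hn (by simp [hc.1, hc.2])
  algebraMap_mem' := by
    intro q
    simp [Algebra.algebraMap_eq_smul_one]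

lemma linmap_rat (f : ℚ →ₗ[ℚ] ℚ) (v : ℚ) : f v = f 1 * v := by
  have h : f v = f (v • 1) := by norm_num
  rw [h, map_smul, smul_eq_mul, mul_comm]

/-- The `∞`-component of an endomorphism of `cObj ℚ`, as a map `ℚ →ₗ[ℚ] ℚ`. -/
def Finf (φ : cObj ℚ ⟶ cObj ℚ) : ℚ →ₗ[ℚ] ℚ := φ.finf

/-- The `k`-component of an endomorphism of `cObj ℚ`, as a map `ℚ →ₗ[ℚ] ℚ`. -/
def Fk (φ : cObj ℚ ⟶ cObj ℚ) (k : ℕ) : ℚ →ₗ[ℚ] ℚ := φ.f k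

lemma VEnd_mk_eq_iff (x y : ∀ _ : ℕ, ℚ) :
    VEnd.mk (V := fun _ => ℚ) x = VEnd.mk y ↔ ∃ N, ∀ k, N ≤ k → x k = y k := by
  show Submodule.Quotient.mk x = Submodule.Quotient.mk y ↔ _
  rw [Submodule.Quotient.eq]
  constructor
  · rintro ⟨N, hN⟩
    exact ⟨N, fun k hk => by have := hN k hk; simpa [sub_eq_zero] using this⟩
  · rintro ⟨N, hN⟩
    exact ⟨N, fun k hk => by simpa [sub_eq_zero] using hN k hk⟩

lemma toS13_mem (φ : cObj ℚ ⟶ cObj ℚ) :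
    ((Finf φ 1, fun k => Fk φ k 1) : ℚ × (ℕ → ℚ)) ∈ S13 := by
  have h := congrArg (fun g => g (1 : ℚ)) φ.comm
  have h2 : VEnd.mk (V := fun _ => ℚ) (fun k => Fk φ k 1) =
      VEnd.mk (fun _ => Finf φ 1) := h
  rw [VEnd_mk_eq_iff] at h2
  obtain ⟨N, hN⟩ := h2
  refine (Set.finite_Iio N).subset ?_
  intro n hn
  simp only [Set.mem_setOf_eq] at hn
  by_contra hc
  simp only [Set.mem_Iio, not_lt] at hc
  exact hn (hN n hc)

/-- Inverse construction: an endomorphism of `cObj ℚ` from an element of `S13`. -/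
def ofS13 (p : S13) : cObj ℚ ⟶ cObj ℚ where
  finf := show ℚ →ₗ[ℚ] ℚ from (p : ℚ × (ℕ → ℚ)).1 • LinearMap.id
  f k := show ℚ →ₗ[ℚ] ℚ from (p : ℚ × (ℕ → ℚ)).2 k • LinearMap.id
  equivar k := by
    show ((p : ℚ × (ℕ → ℚ)).2 k • (LinearMap.id : ℚ →ₗ[ℚ] ℚ)).comp LinearMap.id
        = LinearMap.comp LinearMap.id _
    simp
  comm := by
    obtain ⟨⟨qi, q⟩, hp⟩ := p
    have hp' : {n | q n ≠ qi}.Finite := hp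
    obtain ⟨N, hN⟩ := hp'.bddAbove
    refine LinearMap.ext fun (v : ℚ) => ?_
    show VEnd.mk (V := fun _ => ℚ) (fun k => q k • v) =
      VEnd.mk (V := fun _ => ℚ) (fun _ => qi • v)
    rw [VEnd_mk_eq_iff]
    refine ⟨N + 1, fun k hk => ?_⟩
    have hq : q k = qi := by
      by_contra hc
      have : k ≤ N := hN hc
      omega
    rw [hq]

theorem statement13' :
    ∃ e : (cObj ℚ ⟶ cObj ℚ) ≃ S13,
      e (𝟙 (cObj ℚ)) = 1 ∧
      (∀ f g : cObj ℚ ⟶ cObj ℚ, e (f ≫ g) = e f * e g) ∧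
      (∀ f g : cObj ℚ ⟶ cObj ℚ, e (f + g) = e f + e g) ∧
      (∀ (c : ℚ) (f : cObj ℚ ⟶ cObj ℚ), e (c • f) = c • e f) := by
  refine ⟨{
    toFun := fun φ => ⟨(Finf φ 1, fun k => Fk φ k 1), toS13_mem φ⟩
    invFun := ofS13
    left_inv := ?_
    right_inv := ?_ }, ?_, ?_, ?_, ?_⟩
  · intro φ
    apply AHom.ext
    · show (Finf φ 1 • (LinearMap.id : ℚ →ₗ[ℚ] ℚ)) = Finf φ
      refine LinearMap.ext fun v => ?_
      show Finf φ 1 • v = Finf φ v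
      rw [linmap_rat (Finf φ) v, smul_eq_mul]
    · funext k
      show (Fk φ k 1 • (LinearMap.id : ℚ →ₗ[ℚ] ℚ)) = Fk φ k
      refine LinearMap.ext fun v => ?_
      show Fk φ k 1 • v = Fk φ k v
      rw [linmap_rat (Fk φ k) v, smul_eq_mul]
  · intro p
    apply Subtype.ext
    apply Prod.ext
    · show (p : ℚ × (ℕ → ℚ)).1 • (1 : ℚ) = _
      simp
    · funext k
      show (p : ℚ × (ℕ → ℚ)).2 k • (1 : ℚ) = _
      simp
  · apply Subtype.ext
    apply Prod.ext
    · show (1 : ℚ) = 1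
      rfl
    · show (fun _ : ℕ => (1 : ℚ)) = _
      rfl
  · intro f g
    apply Subtype.ext
    apply Prod.ext
    · show Finf g (Finf f 1) = Finf f 1 * Finf g 1
      rw [linmap_rat (Finf g), mul_comm]
    · funext k
      show Fk g k (Fk f k 1) = Fk f k 1 * Fk g k 1
      rw [linmap_rat (Fk g k), mul_comm]
  · intro f g
    apply Subtype.ext
    apply Prod.ext
    · rfl
    · rfl
  · intro c f
    apply Subtype.ext
    apply Prod.ext
    · rfl
    · rfl

/-- the endomorphism ring `Hom_𝒜(cℚ, cℚ)` is isomorphic, as a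
`ℚ`-algebra, to the ring of sequences `(q_∞, q_1, q_2, ...)` of rationals with
`q_k = q_∞` for all but finitely many `k` (the ring of continuous functions from the
one-point compactification of the discrete naturals to discrete `ℚ`). -/
theorem statement13 :
    ∃ e : (cObj ℚ ⟶ cObj ℚ) ≃ S13,
      e (𝟙 (cObj ℚ)) = 1 ∧
      (∀ f g : cObj ℚ ⟶ cObj ℚ, e (f ≫ g) = e f * e g) ∧
      (∀ f g : cObj ℚ ⟶ cObj ℚ, e (f + g) = e f + e g) ∧
      (∀ (c : ℚ) (f : cObj ℚ ⟶ cObj ℚ), e (c • f) = c • e f) := by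
  exact statement13'
end
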